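/- arXiv:2308.14837 — 9 statements merged into one kernel-verified Lean document; each statement's English description precedes it below -/
import Mathlib

section
/- Let A be a 2×2 matrix with non-negative entries such that there is a permutation π of the columns with A[i,π(1)] ≤ A[i,π(2)] for both rows i. Sample a uniformly random permutation σ of {1,2} and set X_i = A[i,σ(i)]. Then for any two monotone increasing functions f, g : ℝ → ℝ applied to X_1 and X_2 respectively, Cov(f(X_1), g(X_2)) ≤ 0, i.e. E[f(X_1)·g(X_2)] ≤ E[f(X_1)]·E[g(X_2)]. -/
theorem stmt0 (A : Fin 2 → Fin 2 → ℝ) (hA : ∀ i j, 0 ≤ A i j)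
    (π : Equiv.Perm (Fin 2)) (hord : ∀ i, A i (π 0) ≤ A i (π 1))
    (f g : ℝ → ℝ) (hf : Monotone f) (hg : Monotone g) :
    (∑ σ : Equiv.Perm (Fin 2), f (A 0 (σ 0)) * g (A 1 (σ 1))) /
        (Fintype.card (Equiv.Perm (Fin 2)) : ℝ) ≤
      ((∑ σ : Equiv.Perm (Fin 2), f (A 0 (σ 0))) / (Fintype.card (Equiv.Perm (Fin 2)) : ℝ)) *
        ((∑ σ : Equiv.Perm (Fin 2), g (A 1 (σ 1))) / (Fintype.card (Equiv.Perm (Fin 2)) : ℝ)) := by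
  have huniv : (Finset.univ : Finset (Equiv.Perm (Fin 2))) = {1, Equiv.swap 0 1} := by decide
  have hcard : (Fintype.card (Equiv.Perm (Fin 2)) : ℝ) = 2 := by simp [Fintype.card_perm]
  rw [hcard, huniv, Finset.sum_pair (by decide), Finset.sum_pair (by decide),
    Finset.sum_pair (by decide)]
  simp only [Equiv.Perm.one_apply, Equiv.swap_apply_left, Equiv.swap_apply_right]
  -- key: (f (A 0 0) - f (A 0 1)) * (g (A 1 1) - g (A 1 0)) ≤ 0
  have key : (f (A 0 0) - f (A 0 1)) * (g (A 1 1) - g (A 1 0)) ≤ 0 := by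
    have h0 := hord 0
    have h1 := hord 1
    have hπ10 : π 1 ≠ π 0 := fun h => absurd (π.injective h) (by decide)
    rcases (by omega : π 0 = 0 ∨ π 0 = 1) with h | h
    · have h1' : π 1 = 1 := by omega
      rw [h, h1'] at h0 h1
      nlinarith [hf h0, hg h1]
    · have h1' : π 1 = 0 := by omega
      rw [h, h1'] at h0 h1
      nlinarith [hf h0, hg h1]
  nlinarith [key]
end

section
/- Let u, v ∈ ℝ^N be vectors with non-negative entries, and define random variables X_1,…,X_N by sampling a uniformly random permutation π of [N] and setting X_i = u_i · v_{π(i)}. Then X_1,…,X_N are negatively associated: for any two monotone (both increasing or both decreasing) functions f, g depending on disjoint subsets of indices, E[f(X)·g(X)] ≤ E[f(X)]·E[g(X)]. -/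
/-- `f` depends only on the coordinates indexed by `S`. -/
def DependsOnCoords {N : ℕ} (f : (Fin N → ℝ) → ℝ) (S : Finset (Fin N)) : Prop :=
  ∀ x y : Fin N → ℝ, (∀ i ∈ S, x i = y i) → f x = f y

theorem aux_NA (N : ℕ) (u v : Fin N → ℝ) (hu : ∀ i, 0 ≤ u i)
    (f g : (Fin N → ℝ) → ℝ) (S T : Finset (Fin N)) (hST : Disjoint S T)
    (hfS : DependsOnCoords f S) (hgT : DependsOnCoords g T) (hf : Monotone f) (hg : Monotone g) :
    (Fintype.card (Equiv.Perm (Fin N)) : ℝ) *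
        ∑ π : Equiv.Perm (Fin N), f (fun i => u i * v (π i)) * g (fun i => u i * v (π i)) ≤
      (∑ π : Equiv.Perm (Fin N), f (fun i => u i * v (π i))) *
        (∑ π : Equiv.Perm (Fin N), g (fun i => u i * v (π i))) := by
  set F : Equiv.Perm (Fin N) → ℝ := fun π => f (fun i => u i * v (π i)) with hF
  set G : Equiv.Perm (Fin N) → ℝ := fun π => g (fun i => u i * v (π i)) with hG
  set Φ : Equiv.Perm (Fin N) → ℝ := fun ρ => ∑ π : Equiv.Perm (Fin N), F π * G (π * ρ) with hΦ
  have hsum : ∀ (τ : Equiv.Perm (Fin N)) (h : Equiv.Perm (Fin N) → ℝ),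
      ∑ π : Equiv.Perm (Fin N), h (π * τ) = ∑ π, h π := fun τ h => Equiv.sum_comp (Equiv.mulRight τ) h
  -- swap lemma for F
  have h_swapF : ∀ (π : Equiv.Perm (Fin N)) (s a : Fin N), a ∉ S → v (π a) ≤ v (π s) →
      F (π * Equiv.swap s a) ≤ F π := by
    intro π s a haS hle
    have h1 : F (π * Equiv.swap s a) =
        f (Function.update (fun i => u i * v (π i)) s (u s * v (π a))) := by
      apply hfS
      intro i hiS
      by_cases his : i = s
      · subst his
        simp [Equiv.Perm.mul_apply, Equiv.swap_apply_left]
      · have hia : i ≠ a := fun h => haS (h ▸ hiS)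
        simp [Equiv.Perm.mul_apply, Equiv.swap_apply_of_ne_of_ne his hia,
          Function.update_of_ne his]
    rw [h1]
    apply hf
    intro i
    by_cases his : i = s
    · subst his
      rw [Function.update_self]
      exact mul_le_mul_of_nonneg_left hle (hu i)
    · rw [Function.update_of_ne his]
  -- swap lemma for G
  have h_swapG : ∀ (π ρ : Equiv.Perm (Fin N)) (s a : Fin N), (∀ t ∈ T, ρ t ≠ a) →
      v (π a) ≤ v (π s) → G (π * Equiv.swap s a * ρ) ≤ G (π * ρ) := by
    intro π ρ s a haT hle
    have h1 : G (π * Equiv.swap s a * ρ) =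
        g (fun i => if ρ i = s then u i * v (π a) else u i * v (π (ρ i))) := by
      apply hgT
      intro t ht
      by_cases h : ρ t = s
      · simp [Equiv.Perm.mul_apply, h, Equiv.swap_apply_left]
      · simp [Equiv.Perm.mul_apply, h, Equiv.swap_apply_of_ne_of_ne h (haT t ht)]
    rw [h1]
    apply hg
    intro i
    by_cases h : ρ i = s
    · simp only [Equiv.Perm.mul_apply, if_pos h, h]
      exact mul_le_mul_of_nonneg_left hle (hu i)
    · simp [Equiv.Perm.mul_apply, if_neg h]
  -- F doesn't change under swaps off S
  have h_Feq : ∀ (π : Equiv.Perm (Fin N)) (s a : Fin N), s ∉ S → a ∉ S →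
      F (π * Equiv.swap s a) = F π := by
    intro π s a hsS haS
    apply hfS
    intro i hiS
    have his : i ≠ s := fun h => hsS (h ▸ hiS)
    have hia : i ≠ a := fun h => haS (h ▸ hiS)
    simp [Equiv.Perm.mul_apply, Equiv.swap_apply_of_ne_of_ne his hia]
  -- key inequality move
  have keyIneq : ∀ (ρ : Equiv.Perm (Fin N)) (s a : Fin N), a ∉ S → (∀ t ∈ T, ρ t ≠ a) →
      Φ (Equiv.swap s a * ρ) ≤ Φ ρ := by
    intro ρ s a haS haT
    set τ := Equiv.swap s a with hτ
    have hττ : ∀ π : Equiv.Perm (Fin N), π * τ * τ = π := by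
      intro π; rw [mul_assoc, hτ, Equiv.swap_mul_self, mul_one]
    have key : ∀ π : Equiv.Perm (Fin N),
        0 ≤ (F π - F (π * τ)) * (G (π * ρ) - G (π * τ * ρ)) := by
      intro π
      rcases le_total (v (π a)) (v (π s)) with h | h
      · exact mul_nonneg (sub_nonneg.2 (h_swapF π s a haS h))
          (sub_nonneg.2 (h_swapG π ρ s a haT h))
      · have h2 : v ((π * τ) a) ≤ v ((π * τ) s) := by
          simp only [Equiv.Perm.mul_apply, hτ, Equiv.swap_apply_left, Equiv.swap_apply_right]
          exact h
        have hFle : F π ≤ F (π * τ) := by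
          have := h_swapF (π * τ) s a haS h2
          rwa [hττ] at this
        have hGle : G (π * ρ) ≤ G (π * τ * ρ) := by
          have := h_swapG (π * τ) ρ s a haT h2
          rwa [hττ] at this
        have : 0 ≤ (-(F π - F (π * τ))) * (-(G (π * ρ) - G (π * τ * ρ))) :=
          mul_nonneg (by linarith) (by linarith)
        rwa [neg_mul_neg] at this
    have expand : ∑ π : Equiv.Perm (Fin N), (F π - F (π * τ)) * (G (π * ρ) - G (π * τ * ρ))
        = 2 * (Φ ρ - Φ (τ * ρ)) := by
      have e1 : ∑ π : Equiv.Perm (Fin N), F (π * τ) * G (π * τ * ρ)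
          = ∑ π : Equiv.Perm (Fin N), F π * G (π * ρ) :=
        hsum τ (fun π => F π * G (π * ρ))
      have e2 : ∑ π : Equiv.Perm (Fin N), F (π * τ) * G (π * ρ)
          = ∑ π : Equiv.Perm (Fin N), F π * G (π * τ * ρ) := by
        have := hsum τ (fun π => F π * G (π * τ * ρ))
        calc ∑ π : Equiv.Perm (Fin N), F (π * τ) * G (π * ρ)
            = ∑ π : Equiv.Perm (Fin N), F (π * τ) * G (π * τ * τ * ρ) := by
              apply Finset.sum_congr rfl; intro π _; rw [hττ]
          _ = ∑ π : Equiv.Perm (Fin N), F π * G (π * τ * ρ) := this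
      have e3 : Φ (τ * ρ) = ∑ π : Equiv.Perm (Fin N), F π * G (π * τ * ρ) := by
        rw [hΦ]; apply Finset.sum_congr rfl; intro π _; rw [mul_assoc]
      simp only [sub_mul, mul_sub, Finset.sum_sub_distrib]
      rw [e1, e2, e3, hΦ]
      ring
    have hnn : 0 ≤ ∑ π : Equiv.Perm (Fin N), (F π - F (π * τ)) * (G (π * ρ) - G (π * τ * ρ)) :=
      Finset.sum_nonneg (fun π _ => key π)
    rw [expand] at hnn
    linarith
  -- equality move
  have keyEqMove : ∀ (ρ : Equiv.Perm (Fin N)) (s a : Fin N), s ∉ S → a ∉ S →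
      Φ (Equiv.swap s a * ρ) = Φ ρ := by
    intro ρ s a hsS haS
    set τ := Equiv.swap s a with hτ
    have hττ : ∀ π : Equiv.Perm (Fin N), π * τ * τ = π := by
      intro π; rw [mul_assoc, hτ, Equiv.swap_mul_self, mul_one]
    calc Φ (τ * ρ) = ∑ π : Equiv.Perm (Fin N), F π * G (π * τ * ρ) := by
          rw [hΦ]; apply Finset.sum_congr rfl; intro π _; rw [mul_assoc]
      _ = ∑ π : Equiv.Perm (Fin N), F (π * τ) * G (π * τ * τ * ρ) :=
          (hsum τ (fun π => F π * G (π * τ * ρ))).symm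
      _ = ∑ π : Equiv.Perm (Fin N), F π * G (π * ρ) := by
          apply Finset.sum_congr rfl; intro π _
          rw [hττ, h_Feq π s a hsS haS]
      _ = Φ ρ := rfl
  have hGdep : ∀ (π σ : Equiv.Perm (Fin N)), (∀ t ∈ T, π t = σ t) → G π = G σ := by
    intro π σ h
    exact hgT _ _ (fun t ht => by rw [h t ht])
  -- claimEq
  have claimEq : ∀ (n : ℕ) (ρ : Equiv.Perm (Fin N)), (∀ t ∈ T, ρ t ∉ S) →
      (T.filter (fun t => ρ t ≠ t)).card = n → Φ ρ = Φ 1 := by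
    intro n
    induction n using Nat.strong_induction_on with
    | _ n ih =>
      intro ρ hρ hcard
      rcases Finset.eq_empty_or_nonempty (T.filter (fun t => ρ t ≠ t)) with hemp | ⟨t₀, ht₀⟩
      · have hfix : ∀ t ∈ T, ρ t = t := by
          intro t ht
          by_contra hne
          exact absurd (Finset.mem_filter.2 ⟨ht, hne⟩) (hemp ▸ Finset.notMem_empty t)
        rw [hΦ]
        apply Finset.sum_congr rfl
        intro π _
        congr 1
        · apply hGdep
          intro t ht
          simp [Equiv.Perm.mul_apply, hfix t ht]
      · rw [Finset.mem_filter] at ht₀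
        obtain ⟨ht₀T, ht₀ne⟩ := ht₀
        set s := ρ t₀ with hs
        have hsS : s ∉ S := hρ t₀ ht₀T
        have ht₀S : t₀ ∉ S := fun h => (Finset.disjoint_left.1 hST h) ht₀T
        set ρ' := Equiv.swap s t₀ * ρ with hρ'
        have heq : Φ ρ' = Φ ρ := keyEqMove ρ s t₀ hsS ht₀S
        have hρ'h : ∀ t ∈ T, ρ' t ∉ S := by
          intro t ht
          simp only [hρ', Equiv.Perm.mul_apply]
          by_cases h1 : ρ t = s
          · rw [h1, Equiv.swap_apply_left]; exact ht₀S
          · by_cases h2 : ρ t = t₀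
            · rw [h2, Equiv.swap_apply_right]; exact hsS
            · rw [Equiv.swap_apply_of_ne_of_ne h1 h2]; exact hρ t ht
        have hsub : T.filter (fun t => ρ' t ≠ t) ⊆ (T.filter (fun t => ρ t ≠ t)).erase t₀ := by
          intro t ht
          rw [Finset.mem_filter] at ht
          obtain ⟨htT, htne⟩ := ht
          rw [Finset.mem_erase, Finset.mem_filter]
          constructor
          · intro h; subst h
            apply htne
            simp [hρ', Equiv.Perm.mul_apply, ← hs, Equiv.swap_apply_left]
          · refine ⟨htT, ?_⟩
            intro hfixt
            apply htne
            simp only [hρ', Equiv.Perm.mul_apply, hfixt]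
            have h1 : t ≠ s := by
              intro h
              apply ht₀ne
              have : ρ t = ρ t₀ := by rw [hfixt, h, hs]
              have h2 := ρ.injective this
              rw [← h]; exact h2
            have h2 : t ≠ t₀ := by
              intro h; subst h; exact ht₀ne hfixt
            rw [Equiv.swap_apply_of_ne_of_ne h1 h2]
        have hlt : (T.filter (fun t => ρ' t ≠ t)).card < n := by
          have h1 : ((T.filter (fun t => ρ t ≠ t)).erase t₀).card < n := by
            rw [← hcard]
            exact Finset.card_erase_lt_of_mem (Finset.mem_filter.2 ⟨ht₀T, ht₀ne⟩)
          exact lt_of_le_of_lt (Finset.card_le_card hsub) h1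
        rw [← heq]
        exact ih _ hlt ρ' hρ'h rfl
  -- main claim
  have claimMain : ∀ (k : ℕ) (ρ : Equiv.Perm (Fin N)), ((T.image ρ) ∩ S).card = k →
      Φ 1 ≤ Φ ρ := by
    intro k
    induction k using Nat.strong_induction_on with
    | _ k ih =>
      intro ρ hcard
      rcases Finset.eq_empty_or_nonempty ((T.image ρ) ∩ S) with hemp | ⟨s, hsmem⟩
      · have hρ : ∀ t ∈ T, ρ t ∉ S := by
          intro t ht hS
          exact absurd (Finset.mem_inter.2 ⟨Finset.mem_image_of_mem ρ ht, hS⟩)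
            (hemp ▸ Finset.notMem_empty _)
        exact le_of_eq (claimEq _ ρ hρ rfl).symm
      · rw [Finset.mem_inter] at hsmem
        obtain ⟨hsim, hsS⟩ := hsmem
        -- find a outside S ∪ T.image ρ
        have hcardlt : (S ∪ T.image ρ).card < N := by
          have h1 : (S ∪ T.image ρ).card + (S ∩ T.image ρ).card = S.card + (T.image ρ).card :=
            Finset.card_union_add_card_inter S (T.image ρ)
          have h2 : (T.image ρ).card = T.card := Finset.card_image_of_injective T ρ.injective
          have h3 : S.card + T.card ≤ N := by
            have := Finset.card_le_univ (S ∪ T)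
            rw [Finset.card_union_of_disjoint hST] at this
            simpa using this
          have h4 : 1 ≤ (S ∩ T.image ρ).card := by
            apply Finset.card_pos.2
            exact ⟨s, Finset.mem_inter.2 ⟨hsS, hsim⟩⟩
          omega
        obtain ⟨a, ha⟩ : ∃ a, a ∉ S ∪ T.image ρ := by
          by_contra h
          push_neg at h
          have : (Finset.univ : Finset (Fin N)) ⊆ S ∪ T.image ρ := fun x _ => h x
          have := Finset.card_le_card this
          simp at this
          omega
        rw [Finset.mem_union] at ha
        push_neg at ha
        obtain ⟨haS, haim⟩ := ha
        have haT : ∀ t ∈ T, ρ t ≠ a := by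
          intro t ht h
          exact haim (h ▸ Finset.mem_image_of_mem ρ ht)
        have hineq : Φ (Equiv.swap s a * ρ) ≤ Φ ρ := keyIneq ρ s a haS haT
        have hsub : (T.image (Equiv.swap s a * ρ)) ∩ S ⊆ ((T.image ρ) ∩ S).erase s := by
          intro x hx
          rw [Finset.mem_inter] at hx
          obtain ⟨hxim, hxS⟩ := hx
          rw [Finset.mem_image] at hxim
          obtain ⟨t, htT, hxt⟩ := hxim
          have hxt' : Equiv.swap s a (ρ t) = x := hxt
          by_cases h1 : ρ t = s
          · rw [h1, Equiv.swap_apply_left] at hxt'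
            exact absurd (hxt' ▸ hxS) haS
          · have h2 : ρ t ≠ a := haT t htT
            rw [Equiv.swap_apply_of_ne_of_ne h1 h2] at hxt'
            rw [Finset.mem_erase, Finset.mem_inter]
            exact ⟨hxt' ▸ h1, ⟨hxt' ▸ Finset.mem_image_of_mem ρ htT, hxS⟩⟩
        have hlt : ((T.image (Equiv.swap s a * ρ)) ∩ S).card < k := by
          have h1 : (((T.image ρ) ∩ S).erase s).card < k := by
            rw [← hcard]
            exact Finset.card_erase_lt_of_mem (Finset.mem_inter.2 ⟨hsim, hsS⟩)
          exact lt_of_le_of_lt (Finset.card_le_card hsub) h1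
        exact le_trans (ih _ hlt _ rfl) hineq
  -- assemble
  have hΦ1 : Φ 1 = ∑ π : Equiv.Perm (Fin N), F π * G π := by
    rw [hΦ]
    apply Finset.sum_congr rfl
    intro π _
    rw [mul_one]
  have hsum2 : ∑ ρ : Equiv.Perm (Fin N), Φ ρ
      = (∑ π : Equiv.Perm (Fin N), F π) * (∑ π : Equiv.Perm (Fin N), G π) := by
    rw [hΦ]
    calc ∑ ρ : Equiv.Perm (Fin N), ∑ π : Equiv.Perm (Fin N), F π * G (π * ρ)
        = ∑ π : Equiv.Perm (Fin N), ∑ ρ : Equiv.Perm (Fin N), F π * G (π * ρ) :=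
          Finset.sum_comm
      _ = ∑ π : Equiv.Perm (Fin N), F π * ∑ ρ : Equiv.Perm (Fin N), G (π * ρ) := by
          simp [Finset.mul_sum]
      _ = ∑ π : Equiv.Perm (Fin N), F π * ∑ σ : Equiv.Perm (Fin N), G σ := by
          apply Finset.sum_congr rfl
          intro π _
          congr 1
          exact Equiv.sum_comp (Equiv.mulLeft π) G
      _ = (∑ π : Equiv.Perm (Fin N), F π) * (∑ π : Equiv.Perm (Fin N), G π) :=
          (Finset.sum_mul _ _ _).symm
  have hle : ∑ _ρ : Equiv.Perm (Fin N), Φ 1 ≤ ∑ ρ : Equiv.Perm (Fin N), Φ ρ :=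
    Finset.sum_le_sum (fun ρ _ => claimMain _ ρ rfl)
  rw [Finset.sum_const, Finset.card_univ, nsmul_eq_mul, hΦ1, hsum2] at hle
  exact hle

theorem stmt1 (N : ℕ) (u v : Fin N → ℝ) (hu : ∀ i, 0 ≤ u i) (hv : ∀ i, 0 ≤ v i)
    (f g : (Fin N → ℝ) → ℝ) (S T : Finset (Fin N)) (hST : Disjoint S T)
    (hfS : DependsOnCoords f S) (hgT : DependsOnCoords g T)
    (hmono : (Monotone f ∧ Monotone g) ∨ (Antitone f ∧ Antitone g)) :
    (∑ π : Equiv.Perm (Fin N), f (fun i => u i * v (π i)) * g (fun i => u i * v (π i))) /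
        (Fintype.card (Equiv.Perm (Fin N)) : ℝ) ≤
      ((∑ π : Equiv.Perm (Fin N), f (fun i => u i * v (π i))) /
          (Fintype.card (Equiv.Perm (Fin N)) : ℝ)) *
        ((∑ π : Equiv.Perm (Fin N), g (fun i => u i * v (π i))) /
          (Fintype.card (Equiv.Perm (Fin N)) : ℝ)) := by
  have hc : (0 : ℝ) < (Fintype.card (Equiv.Perm (Fin N)) : ℝ) := by
    exact_mod_cast Fintype.card_pos
  have hmain : (Fintype.card (Equiv.Perm (Fin N)) : ℝ) *
      ∑ π : Equiv.Perm (Fin N), f (fun i => u i * v (π i)) * g (fun i => u i * v (π i)) ≤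
      (∑ π : Equiv.Perm (Fin N), f (fun i => u i * v (π i))) *
        (∑ π : Equiv.Perm (Fin N), g (fun i => u i * v (π i))) := by
    rcases hmono with ⟨hfm, hgm⟩ | ⟨hfa, hga⟩
    · exact aux_NA N u v hu f g S T hST hfS hgT hfm hgm
    · have hfm : Monotone (fun x => -(f x)) := fun x y h => neg_le_neg (hfa h)
      have hgm : Monotone (fun x => -(g x)) := fun x y h => neg_le_neg (hga h)
      have hfS' : DependsOnCoords (fun x => -(f x)) S := fun x y h => by dsimp only; rw [hfS x y h]
      have hgT' : DependsOnCoords (fun x => -(g x)) T := fun x y h => by dsimp only; rw [hgT x y h]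
      have := aux_NA N u v hu (fun x => -(f x)) (fun x => -(g x)) S T hST hfS' hgT' hfm hgm
      simp only [neg_mul_neg, Finset.sum_neg_distrib] at this
      simpa using this
  rw [div_mul_div_comm, div_le_div_iff₀ hc (by positivity)]
  nlinarith [mul_le_mul_of_nonneg_right hmain hc.le]
end

section
/- Let u, v ∈ (ℝ_{≥0})^N be non-zero non-negative vectors with (‖u‖₁/‖u‖_∞)·(‖v‖₁/‖v‖_∞) ≥ C·N for some C ≥ 1, and let σ be a fixed permutation of [N]. If τ is a uniformly random permutation of [N], then for any γ > 0, Pr[∑_{i : σ(i)≠i} u_i v_{τ(σ(i))} ≥ e^γ · ‖u‖₁‖v‖₁/N] ≤ exp(−γ²C/2). -/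
open scoped Classical
open Finset

/-- The ℓ¹ norm of a vector. -/
noncomputable def nl1 {N : ℕ} (u : Fin N → ℝ) : ℝ := ∑ i, |u i|

/-- The ℓ∞ norm of a vector. -/
noncomputable def nlinf {N : ℕ} (u : Fin N → ℝ) : ℝ := ⨆ i, |u i|

/-- Key negative-association product inequality for random permutations. -/
lemma perm_prod_le (N : ℕ) (v : Fin N → ℝ) (φ : Fin N → ℝ → ℝ)
    (hpos : ∀ i x, 0 ≤ φ i x) (hmono : ∀ i, Monotone (φ i))
    (A : Finset (Fin N)) :
    (N : ℝ) ^ A.card * ∑ τ : Equiv.Perm (Fin N), ∏ i ∈ A, φ i (v (τ i)) ≤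
      (Nat.factorial N : ℝ) * ∏ i ∈ A, ∑ j, φ i (v j) := by
  induction A using Finset.induction with
  | empty =>
      simp [Fintype.card_perm]
  | @insert i₀ B hi₀ ih =>
      rw [Finset.card_insert_of_notMem hi₀, Finset.prod_insert hi₀]
      set Q : Fin N → ℝ := fun j =>
        ∑ τ ∈ Finset.univ.filter (fun τ : Equiv.Perm (Fin N) => τ i₀ = j),
          ∏ i ∈ B, φ i (v (τ i)) with hQ
      have hsplit : ∑ τ : Equiv.Perm (Fin N), ∏ i ∈ insert i₀ B, φ i (v (τ i)) =
          ∑ j, φ i₀ (v j) * Q j := by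
        rw [← Finset.sum_fiberwise (g := fun τ : Equiv.Perm (Fin N) => τ i₀)
          (s := Finset.univ) (f := fun τ => ∏ i ∈ insert i₀ B, φ i (v (τ i)))]
        refine Finset.sum_congr rfl fun j _ => ?_
        rw [hQ, Finset.mul_sum]
        refine Finset.sum_congr rfl fun τ hτ => ?_
        simp only [Finset.mem_filter] at hτ
        rw [Finset.prod_insert hi₀, hτ.2]
      -- Q antivaries with φ i₀ ∘ v
      have hQanti : Antivary Q (fun j => φ i₀ (v j)) := by
        intro j j' hlt
        -- φ i₀ (v j) < φ i₀ (v j') implies v j ≤ v j'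
        have hvle : v j ≤ v j' := by
          by_contra h
          exact absurd ((hmono i₀) (le_of_lt (not_le.mp h))) (not_le.mpr hlt)
        -- show Q j' ≤ Q j via the swap bijection
        have hkey : ∀ τ : Equiv.Perm (Fin N), τ i₀ = j' →
            ∏ i ∈ B, φ i (v (τ i)) ≤ ∏ i ∈ B, φ i (v ((Equiv.swap j j' * τ) i)) := by
          intro τ hτ
          refine Finset.prod_le_prod (fun i _ => hpos i _) (fun i hiB => ?_)
          have hne : τ i ≠ j' := by
            intro h
            have : i = i₀ := τ.injective (h.trans hτ.symm)
            exact hi₀ (this ▸ hiB)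
          rcases eq_or_ne (τ i) j with h | h
          · simp only [Equiv.Perm.mul_apply, h, Equiv.swap_apply_left]
            exact hmono i hvle
          · simp [Equiv.Perm.mul_apply, Equiv.swap_apply_of_ne_of_ne h hne, le_refl]
        calc Q j' ≤ ∑ τ ∈ Finset.univ.filter (fun τ : Equiv.Perm (Fin N) => τ i₀ = j'),
              ∏ i ∈ B, φ i (v ((Equiv.swap j j' * τ) i)) := by
              refine Finset.sum_le_sum fun τ hτ => ?_
              simp only [Finset.mem_filter] at hτ
              exact hkey τ hτ.2
          _ = Q j := by
              refine Finset.sum_nbij' (fun τ => Equiv.swap j j' * τ)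
                (fun τ => Equiv.swap j j' * τ) ?_ ?_ ?_ ?_ ?_
              · intro τ hτ
                simp only [Finset.mem_filter, Finset.mem_univ, true_and] at hτ ⊢
                simp [hτ, Equiv.Perm.mul_apply]
              · intro τ hτ
                simp only [Finset.mem_filter, Finset.mem_univ, true_and] at hτ ⊢
                simp [hτ, Equiv.Perm.mul_apply, Equiv.swap_apply_right]
              · intro τ _; simp [← mul_assoc]
              · intro τ _; simp [← mul_assoc]
              · intro τ _; rfl
      have hcheb : (Fintype.card (Fin N) : ℝ) * ∑ j, Q j * φ i₀ (v j) ≤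
          (∑ j, Q j) * ∑ j, φ i₀ (v j) := hQanti.card_mul_sum_le_sum_mul_sum
      have hQsum : ∑ j, Q j = ∑ τ : Equiv.Perm (Fin N), ∏ i ∈ B, φ i (v (τ i)) := by
        rw [hQ]
        exact Finset.sum_fiberwise _ _ _
      have hQnn : 0 ≤ ∑ j, Q j := by
        rw [hQsum]
        exact Finset.sum_nonneg fun τ _ => Finset.prod_nonneg fun i _ => hpos i _
      have hφnn : 0 ≤ ∑ j, φ i₀ (v j) := Finset.sum_nonneg fun j _ => hpos i₀ _
      have hNnn : (0:ℝ) ≤ (N:ℝ) ^ B.card := by positivity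
      calc (N : ℝ) ^ (B.card + 1) * ∑ τ : Equiv.Perm (Fin N), ∏ i ∈ insert i₀ B, φ i (v (τ i))
          = (N : ℝ) ^ B.card * ((N : ℝ) * ∑ j, Q j * φ i₀ (v j)) := by
            have hc : ∑ j, φ i₀ (v j) * Q j = ∑ j, Q j * φ i₀ (v j) := by
              exact Finset.sum_congr rfl fun j _ => mul_comm _ _
            rw [hsplit, hc]; ring
        _ ≤ (N : ℝ) ^ B.card * ((∑ j, Q j) * ∑ j, φ i₀ (v j)) := by
            refine mul_le_mul_of_nonneg_left ?_ hNnn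
            simpa [Fintype.card_fin] using hcheb
        _ = (∑ j, φ i₀ (v j)) * ((N : ℝ) ^ B.card * ∑ j, Q j) := by ring
        _ ≤ (∑ j, φ i₀ (v j)) * ((Nat.factorial N : ℝ) * ∏ i ∈ B, ∑ j, φ i (v j)) := by
            refine mul_le_mul_of_nonneg_left ?_ hφnn
            rw [hQsum]
            exact ih
        _ = (Nat.factorial N : ℝ) * ((∑ j, φ i₀ (v j)) * ∏ i ∈ B, ∑ j, φ i (v j)) := by ring

lemma exp_quad_ineq {x : ℝ} (hx : 0 ≤ x) :
    Real.exp x - 1 - x * Real.exp x ≤ -(x ^ 2) / 2 := by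
  set g : ℝ → ℝ := fun x => x * Real.exp x - Real.exp x + 1 - x ^ 2 / 2 with hg
  have hd : ∀ y : ℝ, HasDerivAt g (y * Real.exp y - y) y := by
    intro y
    have h1 : HasDerivAt (fun z : ℝ => z * Real.exp z)
        (1 * Real.exp y + y * Real.exp y) y :=
      (hasDerivAt_id y).mul (Real.hasDerivAt_exp y)
    have h2 := (h1.sub (Real.hasDerivAt_exp y)).add_const 1
    have h4 : HasDerivAt (fun z : ℝ => z ^ 2 / 2) y y := by
      simpa using (hasDerivAt_pow 2 y).div_const 2
    have := h2.sub h4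
    exact this.congr_deriv (by ring)
  have hmono : MonotoneOn g (Set.Ici (0:ℝ)) := by
    refine monotoneOn_of_deriv_nonneg (convex_Ici 0)
      (fun y _ => ((hd y).differentiableAt).continuousAt.continuousWithinAt) ?_ ?_
    · intro y hy
      exact ((hd y).differentiableAt).differentiableWithinAt
    · intro y hy
      rw [(hd y).deriv]
      rw [interior_Ici] at hy
      have hy' : (0:ℝ) < y := hy
      have h1 : (1:ℝ) ≤ Real.exp y := Real.one_le_exp (le_of_lt hy')
      nlinarith
  have h0 : g 0 = 0 := by simp [hg]
  have := hmono (Set.self_mem_Ici) (Set.mem_Ici.mpr hx) hx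
  rw [h0] at this
  simp only [hg] at this
  nlinarith

set_option maxHeartbeats 1000000 in
theorem stmt7 (N : ℕ) (C γ : ℝ) (hC : 1 ≤ C) (hγ : 0 < γ)
    (u v : Fin N → ℝ) (hu : ∀ i, 0 ≤ u i) (hv : ∀ i, 0 ≤ v i)
    (hu0 : u ≠ 0) (hv0 : v ≠ 0)
    (hratio : C * N ≤ (nl1 u / nlinf u) * (nl1 v / nlinf v))
    (σ : Equiv.Perm (Fin N)) :
    ((Finset.univ.filter (fun τ : Equiv.Perm (Fin N) =>
          Real.exp γ * (nl1 u * nl1 v / N) ≤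
            ∑ i ∈ Finset.univ.filter (fun i => σ i ≠ i), u i * v (τ (σ i)))).card : ℝ) /
        (Fintype.card (Equiv.Perm (Fin N)) : ℝ) ≤ Real.exp (-(γ ^ 2 * C) / 2) := by
  classical
  obtain ⟨i₀, hi₀⟩ : ∃ i, u i ≠ 0 := by
    by_contra h; push_neg at h; exact hu0 (funext h)
  obtain ⟨j₀, hj₀⟩ : ∃ j, v j ≠ 0 := by
    by_contra h; push_neg at h; exact hv0 (funext h)
  have hN : 0 < N := i₀.pos
  haveI : Nonempty (Fin N) := ⟨i₀⟩
  set Mu := nlinf u with hMu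
  set Mv := nlinf v with hMv
  set U := nl1 u with hU
  set V := nl1 v with hV
  have huM : ∀ i, u i ≤ Mu := fun i => by
    rw [hMu, nlinf]
    exact (abs_of_nonneg (hu i)) ▸
      le_ciSup (f := fun k => |u k|) (Set.finite_range _).bddAbove i
  have hvM : ∀ j, v j ≤ Mv := fun j => by
    rw [hMv, nlinf]
    exact (abs_of_nonneg (hv j)) ▸
      le_ciSup (f := fun k => |v k|) (Set.finite_range _).bddAbove j
  have hMu0 : 0 < Mu := lt_of_lt_of_le (lt_of_le_of_ne (hu i₀) (Ne.symm hi₀)) (huM i₀)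
  have hMv0 : 0 < Mv := lt_of_lt_of_le (lt_of_le_of_ne (hv j₀) (Ne.symm hj₀)) (hvM j₀)
  have hUeq : U = ∑ i, u i := by
    rw [hU]; exact Finset.sum_congr rfl fun i _ => abs_of_nonneg (hu i)
  have hVeq : V = ∑ j, v j := by
    rw [hV]; exact Finset.sum_congr rfl fun j _ => abs_of_nonneg (hv j)
  have hu0' : 0 < u i₀ := lt_of_le_of_ne (hu i₀) (Ne.symm hi₀)
  have hv0' : 0 < v j₀ := lt_of_le_of_ne (hv j₀) (Ne.symm hj₀)
  have hU0 : 0 < U := by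
    rw [hUeq]
    have := Finset.single_le_sum (f := u) (fun i _ => hu i) (Finset.mem_univ i₀)
    linarith
  have hV0 : 0 < V := by
    rw [hVeq]
    have := Finset.single_le_sum (f := v) (fun j _ => hv j) (Finset.mem_univ j₀)
    linarith
  have hNpos : (0:ℝ) < N := Nat.cast_pos.mpr hN
  have hMM : (0:ℝ) < Mu * Mv := mul_pos hMu0 hMv0
  have hNMM : (0:ℝ) < (N:ℝ) * (Mu * Mv) := mul_pos hNpos hMM
  set m := U * V / (N * (Mu * Mv)) with hm
  have hmC : C ≤ m := by
    rw [hm, le_div_iff₀ hNMM]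
    rw [div_mul_div_comm, le_div_iff₀ hMM] at hratio
    nlinarith [hratio]
  have hC0 : (0:ℝ) < C := lt_of_lt_of_le one_pos hC
  have hm0 : 0 < m := lt_of_lt_of_le hC0 hmC
  set t := γ / (Mu * Mv) with ht
  have ht0 : 0 < t := div_pos hγ hMM
  set φ : Fin N → ℝ → ℝ := fun i x => Real.exp (t * (u i * x)) with hφ
  set a := Real.exp γ * (U * V / N) with ha
  -- step 1 : card bound by exponential sum
  have hstep1 : ((Finset.univ.filter (fun τ : Equiv.Perm (Fin N) =>
        a ≤ ∑ i ∈ Finset.univ.filter (fun i => σ i ≠ i), u i * v (τ (σ i)))).card : ℝ) ≤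
      ∑ τ : Equiv.Perm (Fin N), Real.exp (t * (∑ i, u i * v (τ (σ i))) - t * a) := by
    set E := Finset.univ.filter (fun τ : Equiv.Perm (Fin N) =>
        a ≤ ∑ i ∈ Finset.univ.filter (fun i => σ i ≠ i), u i * v (τ (σ i))) with hE
    calc (E.card : ℝ) = ∑ τ ∈ E, (1:ℝ) := by simp
      _ ≤ ∑ τ ∈ E, Real.exp (t * (∑ i, u i * v (τ (σ i))) - t * a) := by
          refine Finset.sum_le_sum fun τ hτ => ?_
          rw [hE, Finset.mem_filter] at hτ
          have hS := hτ.2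
          have hST : (∑ i ∈ Finset.univ.filter (fun i => σ i ≠ i), u i * v (τ (σ i))) ≤
              ∑ i, u i * v (τ (σ i)) :=
            Finset.sum_le_sum_of_subset_of_nonneg (Finset.filter_subset _ _)
              (fun i _ _ => mul_nonneg (hu i) (hv _))
          have h0 : 0 ≤ t * (∑ i, u i * v (τ (σ i))) - t * a := by nlinarith
          exact Real.one_le_exp h0
      _ ≤ ∑ τ : Equiv.Perm (Fin N), Real.exp (t * (∑ i, u i * v (τ (σ i))) - t * a) :=
          Finset.sum_le_sum_of_subset_of_nonneg (Finset.subset_univ E)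
            (fun τ _ _ => (Real.exp_pos _).le)
  -- rewrite each term as exp(-(t*a)) * product
  have hterm : ∀ τ : Equiv.Perm (Fin N),
      Real.exp (t * (∑ i, u i * v (τ (σ i))) - t * a)
        = Real.exp (-(t * a)) * ∏ i, φ i (v (τ (σ i))) := by
    intro τ
    have h1 : t * (∑ i, u i * v (τ (σ i))) = ∑ i, t * (u i * v (τ (σ i))) :=
      Finset.mul_sum _ _ _
    rw [sub_eq_add_neg, Real.exp_add, mul_comm, h1, Real.exp_sum]
  -- reindex : remove σ
  have hreindex : ∑ τ : Equiv.Perm (Fin N), ∏ i, φ i (v (τ (σ i)))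
      = ∑ ρ : Equiv.Perm (Fin N), ∏ i, φ i (v (ρ i)) := by
    refine Fintype.sum_equiv (Equiv.mulRight σ) _ _ fun τ => ?_
    rfl
  -- key lemma
  have hkey := perm_prod_le N v φ (fun i x => (Real.exp_pos _).le)
    (fun i x y hxy =>
      Real.exp_le_exp.mpr (mul_le_mul_of_nonneg_left
        (mul_le_mul_of_nonneg_left hxy (hu i)) ht0.le)) Finset.univ
  rw [Finset.card_univ, Fintype.card_fin] at hkey
  -- per-factor bound
  have hfac : ∀ i, (∑ j, φ i (v j)) ≤
      (N:ℝ) * Real.exp (u i * V * (Real.exp γ - 1) / (N * (Mu * Mv))) := by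
    intro i
    have hconv : ∀ j, φ i (v j) ≤ 1 + (u i * v j) / (Mu * Mv) * (Real.exp γ - 1) := by
      intro j
      set s := (u i * v j) / (Mu * Mv) with hs
      have hs0 : 0 ≤ s := div_nonneg (mul_nonneg (hu i) (hv j)) hMM.le
      have hs1 : s ≤ 1 := by
        rw [hs, div_le_one hMM]
        exact mul_le_mul (huM i) (hvM j) (hv j) hMu0.le
      have harg : t * (u i * v j) = s * γ := by
        rw [ht, hs]; field_simp
      have hcx := convexOn_exp.2 (Set.mem_univ (0:ℝ)) (Set.mem_univ γ)
        (by linarith : (0:ℝ) ≤ 1 - s) hs0 (by ring)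
      simp only [smul_eq_mul, mul_zero, zero_add, Real.exp_zero, mul_one] at hcx
      simp only [hφ]
      rw [harg]
      calc Real.exp (s * γ) ≤ (1 - s) + s * Real.exp γ := hcx
        _ = 1 + s * (Real.exp γ - 1) := by ring
    have hsum2 : ∑ j : Fin N, (u i * v j) / (Mu * Mv) * (Real.exp γ - 1)
        = (u i * V) / (Mu * Mv) * (Real.exp γ - 1) := by
      rw [hVeq, Finset.mul_sum, Finset.sum_div, Finset.sum_mul]
    calc (∑ j, φ i (v j)) ≤ ∑ j, (1 + (u i * v j) / (Mu * Mv) * (Real.exp γ - 1)) :=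
        Finset.sum_le_sum (fun j _ => hconv j)
      _ = (N:ℝ) + (u i * V) / (Mu * Mv) * (Real.exp γ - 1) := by
          rw [Finset.sum_add_distrib, hsum2, Finset.sum_const, Finset.card_univ,
            Fintype.card_fin, nsmul_eq_mul, mul_one]
      _ = (N:ℝ) * (1 + u i * V * (Real.exp γ - 1) / (N * (Mu * Mv))) := by
          field_simp
      _ ≤ (N:ℝ) * Real.exp (u i * V * (Real.exp γ - 1) / (N * (Mu * Mv))) := by
          refine mul_le_mul_of_nonneg_left ?_ hNpos.le
          have := Real.add_one_le_exp (u i * V * (Real.exp γ - 1) / (N * (Mu * Mv)))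
          linarith
  -- product bound
  have hprodb : (∏ i, ∑ j, φ i (v j)) ≤ (N:ℝ)^N * Real.exp (m * (Real.exp γ - 1)) := by
    have hsum3 : ∑ i : Fin N, u i * V * (Real.exp γ - 1) / (N * (Mu * Mv))
        = m * (Real.exp γ - 1) := by
      calc ∑ i : Fin N, u i * V * (Real.exp γ - 1) / (N * (Mu * Mv))
          = (∑ i, u i) * (V * (Real.exp γ - 1) / (N * (Mu * Mv))) := by
            rw [Finset.sum_mul]
            exact Finset.sum_congr rfl fun i _ => by ring
        _ = m * (Real.exp γ - 1) := by rw [hm, hUeq]; ring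
    calc (∏ i, ∑ j, φ i (v j))
        ≤ ∏ i, ((N:ℝ) * Real.exp (u i * V * (Real.exp γ - 1) / (N * (Mu * Mv)))) :=
          Finset.prod_le_prod (fun i _ => Finset.sum_nonneg fun j _ => (Real.exp_pos _).le)
            (fun i _ => hfac i)
      _ = (N:ℝ)^N * Real.exp (∑ i, u i * V * (Real.exp γ - 1) / (N * (Mu * Mv))) := by
          rw [Finset.prod_mul_distrib, Finset.prod_const, Finset.card_univ,
            Fintype.card_fin, ← Real.exp_sum]
      _ = (N:ℝ)^N * Real.exp (m * (Real.exp γ - 1)) := by rw [hsum3]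
  -- sum bound
  have hsum_le : ∑ ρ : Equiv.Perm (Fin N), ∏ i, φ i (v (ρ i)) ≤
      (N.factorial : ℝ) * Real.exp (m * (Real.exp γ - 1)) := by
    have hNN : (0:ℝ) < (N:ℝ)^N := pow_pos hNpos N
    rw [← mul_le_mul_iff_right₀ hNN]
    calc (N:ℝ)^N * ∑ ρ : Equiv.Perm (Fin N), ∏ i, φ i (v (ρ i))
        ≤ (N.factorial : ℝ) * ∏ i, ∑ j, φ i (v j) := hkey
      _ ≤ (N.factorial : ℝ) * ((N:ℝ)^N * Real.exp (m * (Real.exp γ - 1))) :=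
          mul_le_mul_of_nonneg_left hprodb (by positivity)
      _ = (N:ℝ)^N * ((N.factorial : ℝ) * Real.exp (m * (Real.exp γ - 1))) := by ring
  -- combine
  have hfinal1 : ((Finset.univ.filter (fun τ : Equiv.Perm (Fin N) =>
        a ≤ ∑ i ∈ Finset.univ.filter (fun i => σ i ≠ i), u i * v (τ (σ i)))).card : ℝ) ≤
      (N.factorial : ℝ) * Real.exp (m * (Real.exp γ - 1) - t * a) := by
    calc ((Finset.univ.filter (fun τ : Equiv.Perm (Fin N) =>
          a ≤ ∑ i ∈ Finset.univ.filter (fun i => σ i ≠ i), u i * v (τ (σ i)))).card : ℝ)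
        ≤ ∑ τ : Equiv.Perm (Fin N), Real.exp (t * (∑ i, u i * v (τ (σ i))) - t * a) := hstep1
      _ = Real.exp (-(t * a)) * ∑ τ : Equiv.Perm (Fin N), ∏ i, φ i (v (τ (σ i))) := by
          rw [Finset.mul_sum]
          exact Finset.sum_congr rfl fun τ _ => hterm τ
      _ = Real.exp (-(t * a)) * ∑ ρ : Equiv.Perm (Fin N), ∏ i, φ i (v (ρ i)) := by
          rw [hreindex]
      _ ≤ Real.exp (-(t * a)) * ((N.factorial : ℝ) * Real.exp (m * (Real.exp γ - 1))) :=
          mul_le_mul_of_nonneg_left hsum_le (Real.exp_pos _).le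
      _ = (N.factorial : ℝ) * Real.exp (m * (Real.exp γ - 1) - t * a) := by
          rw [show m * (Real.exp γ - 1) - t * a = -(t * a) + m * (Real.exp γ - 1) by ring,
            Real.exp_add]
          ring
  -- exponent bound
  have hta : t * a = γ * Real.exp γ * m := by
    rw [ht, ha, hm]
    ring
  have hexp : m * (Real.exp γ - 1) - t * a ≤ -(γ ^ 2 * C) / 2 := by
    rw [hta]
    have h1 := exp_quad_ineq hγ.le
    nlinarith [mul_le_mul_of_nonneg_left h1 hm0.le,
      mul_nonneg (sub_nonneg.mpr hmC) (sq_nonneg γ)]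
  -- finish
  have hcard : (Fintype.card (Equiv.Perm (Fin N)) : ℝ) = (N.factorial : ℝ) := by
    rw [Fintype.card_perm, Fintype.card_fin]
  rw [hcard, div_le_iff₀ (by exact_mod_cast N.factorial_pos)]
  calc ((Finset.univ.filter (fun τ : Equiv.Perm (Fin N) =>
        a ≤ ∑ i ∈ Finset.univ.filter (fun i => σ i ≠ i), u i * v (τ (σ i)))).card : ℝ)
      ≤ (N.factorial : ℝ) * Real.exp (m * (Real.exp γ - 1) - t * a) := hfinal1
    _ ≤ (N.factorial : ℝ) * Real.exp (-(γ ^ 2 * C) / 2) :=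
        mul_le_mul_of_nonneg_left (Real.exp_le_exp.mpr hexp) (Nat.cast_nonneg _)
    _ = Real.exp (-(γ ^ 2 * C) / 2) * (N.factorial : ℝ) := mul_comm _ _
end

section
/- Let u = v = (1,1,0,0)ᵀ ∈ ℝ⁴ and let σ = (1 2)(3 4). Define X_1 = u_{τ(1)} v_{τ(σ(1))} and X_2 = u_{τ(2)} v_{τ(σ(2))} where τ is a uniformly random permutation of {1,2,3,4}. Then E[X_1 X_2] = 1/6 > E[X_1]·E[X_2], so X_1, X_2 are not negatively associated. -/
open Finset

lemma u_eq (i : Fin 4) : (![1,1,0,0] : Fin 4 → ℝ) i = if i.val < 2 then 1 else 0 := by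
  fin_cases i <;> simp

lemma card1 : (univ.filter (fun τ : Equiv.Perm (Fin 4) =>
    (τ 0).val < 2 ∧ (τ 1).val < 2)).card = 4 := by decide

lemma card2 : (univ.filter (fun τ : Equiv.Perm (Fin 4) =>
    (τ 0).val < 2)).card = 12 := by decide

theorem stmt10 :
    let u : Fin 4 → ℝ := ![1, 1, 0, 0]
    let σ : Equiv.Perm (Fin 4) := Equiv.swap 0 1 * Equiv.swap 2 3
    (∑ τ : Equiv.Perm (Fin 4), (u (τ 0) * u (τ (σ 0))) * (u (τ 1) * u (τ (σ 1)))) /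
        (Fintype.card (Equiv.Perm (Fin 4)) : ℝ) = 1 / 6 ∧
      ((∑ τ : Equiv.Perm (Fin 4), u (τ 0) * u (τ (σ 0))) /
            (Fintype.card (Equiv.Perm (Fin 4)) : ℝ)) *
          ((∑ τ : Equiv.Perm (Fin 4), u (τ 1) * u (τ (σ 1))) /
            (Fintype.card (Equiv.Perm (Fin 4)) : ℝ)) < 1 / 6 := by
  intro u σ
  have hσ0 : σ 0 = 1 := by decide
  have hσ1 : σ 1 = 0 := by decide
  have h1 : (∑ τ : Equiv.Perm (Fin 4), (u (τ 0) * u (τ (σ 0))) * (u (τ 1) * u (τ (σ 1))))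
      = ((univ.filter (fun τ : Equiv.Perm (Fin 4) => (τ 0).val < 2 ∧ (τ 1).val < 2)).card : ℝ) := by
    rw [← Finset.sum_boole]
    refine Finset.sum_congr rfl fun τ _ => ?_
    rw [hσ0, hσ1]
    show (u (τ 0) * u (τ 1)) * (u (τ 1) * u (τ 0)) = _
    simp only [u, u_eq]
    by_cases h0 : (τ 0).val < 2 <;> by_cases h1 : (τ 1).val < 2 <;> simp [h0, h1]
  have h2 : (∑ τ : Equiv.Perm (Fin 4), u (τ 0) * u (τ (σ 0)))
      = ((univ.filter (fun τ : Equiv.Perm (Fin 4) => (τ 0).val < 2 ∧ (τ 1).val < 2)).card : ℝ) := by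
    rw [← Finset.sum_boole]
    refine Finset.sum_congr rfl fun τ _ => ?_
    rw [hσ0]
    show u (τ 0) * u (τ 1) = _
    simp only [u, u_eq]
    by_cases h0 : (τ 0).val < 2 <;> by_cases h1 : (τ 1).val < 2 <;> simp [h0, h1]
  have h3 : (∑ τ : Equiv.Perm (Fin 4), u (τ 1) * u (τ (σ 1)))
      = ((univ.filter (fun τ : Equiv.Perm (Fin 4) => (τ 0).val < 2 ∧ (τ 1).val < 2)).card : ℝ) := by
    rw [← Finset.sum_boole]
    refine Finset.sum_congr rfl fun τ _ => ?_
    rw [hσ1]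
    show u (τ 1) * u (τ 0) = _
    simp only [u, u_eq]
    by_cases h0 : (τ 0).val < 2 <;> by_cases h1 : (τ 1).val < 2 <;> simp [h0, h1, and_comm]
  rw [h1, h2, h3, card1]
  norm_num [Fintype.card_perm, Nat.factorial]
end

section
/- Let u, v ∈ (ℝ_{≥0})^N be non-zero non-negative vectors satisfying (‖u‖₁/‖u‖_∞)(‖v‖₁/‖v‖_∞) ≥ CN with C ≥ 1. For K ≤ N/2, let (Q,R) be a uniformly random ordered pair of disjoint K-element subsets of [N]. Then for 0 < γ < 1: Pr[∑_{i∈Q}∑_{j∈R} u_i v_j ≥ e^γ (K²/N²)‖u‖₁‖v‖₁] ≤ 2·exp(−γ²CK/(8N)). -/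
open scoped Classical

section Helpers
open Finset
section Helpers
open Finset


lemma sign_lemma (n : ℕ) {x a : ℝ} (hx : 0 ≤ x) (ha : 0 ≤ a) :
    0 ≤ (x - a) * (x^n - a^n) := by
  rcases le_total a x with h | h
  · exact mul_nonneg (by linarith) (by have := pow_le_pow_left₀ ha h n; linarith)
  · have := pow_le_pow_left₀ hx h n
    nlinarith

lemma tangent (k : ℕ) {x a : ℝ} (hx : 0 ≤ x) (ha : 0 ≤ a) :
    a^k * ((k+1) * x - k * a) ≤ x^(k+1) := by
  induction k with
  | zero => simp
  | succ k ih =>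
    have h1 : a * (a^k * ((k+1) * x - k * a)) ≤ a * x^(k+1) :=
      mul_le_mul_of_nonneg_left ih ha
    have h2 := sign_lemma (k+1) hx ha
    have e1 : a^(k+1) * ((k+1+1) * x - (k+1) * a)
        = a * (a^k * ((k+1) * x - k * a)) + (a * a^k) * (x - a) := by ring
    have e2 : x^(k+1+1) = x * x^(k+1) := by ring
    have e4 : a^(k+1) = a * a^k := by ring
    push_cast
    push_cast at h1 e1
    nlinarith [h2, h1, e2, e4]

lemma key (n k : ℕ) {S t : ℝ} (hS : 0 ≤ S) (ht : 0 ≤ t) :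
    ((n:ℝ)+1)^(k+1) * ((n.choose (k+1)) * S^(k+1) + t * (n:ℝ) * (n.choose k) * S^k)
      ≤ (n:ℝ)^(k+1) * ((n+1).choose (k+1) : ℝ) * (S+t)^(k+1) := by
  set C : ℝ := ((n+1).choose (k+1) : ℝ) with hCdef
  have h1 : ((n:ℝ)+1) * (n.choose k) = ((k:ℝ)+1) * C := by
    rw [hCdef]
    have h := Nat.add_one_mul_choose_eq n k
    have h' : ((n:ℝ)+1) * (n.choose k) = ((n+1).choose (k+1) : ℝ) * ((k:ℝ)+1) := by
      exact_mod_cast h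
    linear_combination h'
  have hp : C = (n.choose k : ℝ) + (n.choose (k+1) : ℝ) := by
    rw [hCdef]; exact_mod_cast Nat.choose_succ_succ' n k
  have h3 : C * ((n:ℝ) - k) = ((n:ℝ)+1) * (n.choose (k+1)) := by
    linear_combination ((n:ℝ)+1) * hp + h1
  have hx : (0:ℝ) ≤ (n:ℝ)*(S+t) := by positivity
  have ha : (0:ℝ) ≤ ((n:ℝ)+1)*S := by positivity
  have hC0 : (0:ℝ) ≤ C := by positivity
  have tg := tangent k hx ha
  rw [mul_pow, mul_pow] at tg
  have H := mul_le_mul_of_nonneg_left tg hC0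
  have eL : ((n:ℝ)+1)^(k+1) * ((n.choose (k+1)) * S^(k+1) + t * (n:ℝ) * (n.choose k) * S^k)
      = C * (((n:ℝ)+1)^k * S^k * (((k:ℝ)+1)*((n:ℝ)*(S+t)) - (k:ℝ)*(((n:ℝ)+1)*S))) := by
    linear_combination (-(((n:ℝ)+1)^k * S^(k+1))) * h3 + (((n:ℝ)+1)^k * S^k * t * (n:ℝ)) * h1
  have eR : (n:ℝ)^(k+1) * C * (S+t)^(k+1) = C * ((n:ℝ)^(k+1) * (S+t)^(k+1)) := by ring
  rw [eL, eR]
  exact H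

lemma maclaurin {ι : Type*} [DecidableEq ι] (x : ι → ℝ) (s : Finset ι)
    (hx : ∀ i ∈ s, 0 ≤ x i) (K : ℕ) :
    (s.card : ℝ)^K * ∑ Q ∈ s.powersetCard K, ∏ i ∈ Q, x i
      ≤ (s.card.choose K : ℝ) * (∑ i ∈ s, x i)^K := by
  induction s using Finset.induction_on generalizing K with
  | empty => cases K <;> simp
  | @insert a s ha ih =>
    have hxs : ∀ i ∈ s, 0 ≤ x i := fun i hi => hx i (Finset.mem_insert_of_mem hi)
    have hxa : 0 ≤ x a := hx a (Finset.mem_insert_self a s)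
    cases K with
    | zero => simp
    | succ k =>
      have hdisj : Disjoint (s.powersetCard (k+1)) ((s.powersetCard k).image (insert a)) := by
        rw [Finset.disjoint_left]
        intro Q hQ hQ'
        obtain ⟨R, hR, rfl⟩ := Finset.mem_image.1 hQ'
        exact ha ((Finset.mem_powersetCard.1 hQ).1 (Finset.mem_insert_self a R))
      have hinj : ∀ Q ∈ s.powersetCard k, ∀ Q' ∈ s.powersetCard k,
          insert a Q = insert a Q' → Q = Q' := by
        intro Q hQ Q' hQ' h
        have haQ : a ∉ Q := fun hh => ha ((Finset.mem_powersetCard.1 hQ).1 hh)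
        have haQ' : a ∉ Q' := fun hh => ha ((Finset.mem_powersetCard.1 hQ').1 hh)
        rw [← Finset.erase_insert haQ, ← Finset.erase_insert haQ', h]
      have hprod : ∑ Q ∈ (s.powersetCard k).image (insert a), ∏ i ∈ Q, x i
          = x a * ∑ Q ∈ s.powersetCard k, ∏ i ∈ Q, x i := by
        rw [Finset.sum_image hinj, Finset.mul_sum]
        refine Finset.sum_congr rfl fun Q hQ => ?_
        rw [Finset.prod_insert (fun hh => ha ((Finset.mem_powersetCard.1 hQ).1 hh))]
      rw [Finset.powersetCard_succ_insert ha, Finset.sum_union hdisj, hprod,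
        Finset.card_insert_of_notMem ha, Finset.sum_insert ha]
      set E1 := ∑ Q ∈ s.powersetCard (k+1), ∏ i ∈ Q, x i with hE1d
      set E0 := ∑ Q ∈ s.powersetCard k, ∏ i ∈ Q, x i with hE0d
      set S := ∑ i ∈ s, x i with hSd
      set n := s.card with hnd
      have hS : 0 ≤ S := Finset.sum_nonneg hxs
      have IH1 : (n:ℝ)^(k+1) * E1 ≤ (n.choose (k+1) : ℝ) * S^(k+1) := ih hxs (k+1)
      have IH0 : (n:ℝ)^k * E0 ≤ (n.choose k : ℝ) * S^k := ih hxs k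
      rcases Nat.eq_zero_or_pos n with hn0 | hnpos
      · have hse : s = ∅ := Finset.card_eq_zero.1 (by omega)
        subst hse
        simp only [hE1d, hE0d, hSd, hn0] at *
        cases k with
        | zero =>
          rw [Finset.powersetCard_eq_empty.2 (by simp)]
          simp
        | succ k =>
          rw [Finset.powersetCard_eq_empty.2 (by simp), Finset.powersetCard_eq_empty.2 (by simp)]
          simp only [Finset.sum_empty, mul_zero, add_zero, zero_add]
          positivity
      · have hn : (0:ℝ) < (n:ℝ)^(k+1) := by positivity
        rw [← mul_le_mul_iff_right₀ hn]
        have hkey := key n k hS hxa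
        have A1 : (n:ℝ)^(k+1) * (((n:ℕ)+1 : ℕ) ^ (k+1) * (E1 + x a * E0) : ℝ)
            = ((n:ℝ)+1)^(k+1) * ((n:ℝ)^(k+1)*E1)
              + (((n:ℝ)+1)^(k+1) * (x a * (n:ℝ))) * ((n:ℝ)^k * E0) := by
          push_cast; ring
        calc (n:ℝ)^(k+1) * (((n:ℕ)+1 : ℕ) ^ (k+1) * (E1 + x a * E0) : ℝ)
            = ((n:ℝ)+1)^(k+1) * ((n:ℝ)^(k+1)*E1)
              + (((n:ℝ)+1)^(k+1) * (x a * (n:ℝ))) * ((n:ℝ)^k * E0) := A1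
          _ ≤ ((n:ℝ)+1)^(k+1) * ((n.choose (k+1) : ℝ) * S^(k+1))
              + (((n:ℝ)+1)^(k+1) * (x a * (n:ℝ))) * ((n.choose k : ℝ) * S^k) := by
              gcongr <;> positivity
          _ = ((n:ℝ)+1)^(k+1) * ((n.choose (k+1) : ℝ) * S^(k+1)
              + x a * (n:ℝ) * (n.choose k : ℝ) * S^k) := by ring
          _ ≤ (n:ℝ)^(k+1) * ((n+1).choose (k+1) : ℝ) * (S + x a)^(k+1) := hkey
          _ = (n:ℝ)^(k+1) * (((n+1).choose (k+1) : ℝ) * (x a + S)^(k+1)) := by ring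


lemma expquad {θ : ℝ} (hθ0 : 0 ≤ θ) (hθ1 : θ ≤ 1) :
    θ^2/2 ≤ θ * Real.exp θ - Real.exp θ + 1 := by
  have habs : |θ| ≤ 1 := by rw [abs_of_nonneg hθ0]; exact hθ1
  have hb := Real.exp_bound habs (by norm_num : 0 < 3)
  have hsum : ∑ i ∈ Finset.range 3, θ^i / (Nat.factorial i) = 1 + θ + θ^2/2 := by
    simp [Finset.sum_range_succ, Nat.factorial]
  rw [hsum, abs_of_nonneg hθ0] at hb
  have hub : Real.exp θ ≤ 1 + θ + θ^2/2 + (2/9)*θ^3 := by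
    have := abs_le.1 hb
    have h4 : ((3:ℕ).succ : ℝ) / ((Nat.factorial 3) * 3) = 2/9 := by norm_num [Nat.factorial]
    nlinarith [this.2]
  nlinarith [mul_nonneg (sub_nonneg.2 hθ1) (sub_nonneg.2 hub),
    pow_nonneg hθ0 3, pow_nonneg hθ0 4]

lemma expconv {θ y : ℝ} (hθ : 0 ≤ θ) (hy0 : 0 ≤ y) (hy1 : y ≤ 1) :
    Real.exp (θ * y) ≤ 1 + (Real.exp θ - 1) * y := by
  have h := convexOn_exp.2 (Set.mem_univ (0:ℝ)) (Set.mem_univ θ)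
    (by linarith : (0:ℝ) ≤ 1 - y) hy0 (by ring)
  simp only [smul_eq_mul, mul_zero, zero_add, Real.exp_zero, mul_one] at h
  rw [mul_comm θ y]
  nlinarith [h]

lemma chern01 (N K : ℕ) (hN : 0 < N) (y : Fin N → ℝ) (γ : ℝ)
    (hy0 : ∀ i, 0 ≤ y i) (hy1 : ∀ i, y i ≤ 1) (hγ0 : 0 < γ) (hγ1 : γ < 1) :
    (((Finset.powersetCard K (Finset.univ : Finset (Fin N))).filter
        (fun Q => Real.exp (γ/2) * ((K:ℝ)/(N:ℝ)) * (∑ i, y i) ≤ ∑ i ∈ Q, y i)).card : ℝ)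
      ≤ (N.choose K : ℝ) * Real.exp (-(γ^2 * K * (∑ i, y i)) / (8*N)) := by
  classical
  set θ : ℝ := γ/2 with hθd
  have hθ0 : 0 ≤ θ := by positivity
  have hθ1 : θ ≤ 1 := by rw [hθd]; linarith
  set S : ℝ := ∑ i, y i with hSd
  have hS : 0 ≤ S := Finset.sum_nonneg fun i _ => hy0 i
  set t : ℝ := Real.exp θ * ((K:ℝ)/(N:ℝ)) * S with htd
  set F := (Finset.powersetCard K (Finset.univ : Finset (Fin N))).filter
      (fun Q => t ≤ ∑ i ∈ Q, y i) with hFd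
  have hNpos : (0:ℝ) < (N:ℝ) := by exact_mod_cast hN
  -- step 1
  have step1 : (F.card : ℝ) * Real.exp (θ * t) ≤ ∑ Q ∈ F, Real.exp (θ * ∑ i ∈ Q, y i) := by
    have h := Finset.card_nsmul_le_sum F (fun Q => Real.exp (θ * ∑ i ∈ Q, y i))
      (Real.exp (θ * t)) (fun Q hQ => by
        have ht := (Finset.mem_filter.1 hQ).2
        exact Real.exp_le_exp.2 (mul_le_mul_of_nonneg_left ht hθ0))
    simpa [nsmul_eq_mul] using h
  have step2 : ∑ Q ∈ F, Real.exp (θ * ∑ i ∈ Q, y i)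
      ≤ ∑ Q ∈ Finset.powersetCard K (Finset.univ : Finset (Fin N)), Real.exp (θ * ∑ i ∈ Q, y i) :=
    Finset.sum_le_sum_of_subset_of_nonneg (Finset.filter_subset _ _)
      (fun _ _ _ => (Real.exp_pos _).le)
  have step3 : ∑ Q ∈ Finset.powersetCard K (Finset.univ : Finset (Fin N)), Real.exp (θ * ∑ i ∈ Q, y i)
      = ∑ Q ∈ Finset.powersetCard K (Finset.univ : Finset (Fin N)), ∏ i ∈ Q, Real.exp (θ * y i) := by
    refine Finset.sum_congr rfl fun Q _ => ?_
    rw [Finset.mul_sum, Real.exp_sum]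
  set Z : ℝ := ∑ i, Real.exp (θ * y i) with hZd
  have hmac := maclaurin (fun i => Real.exp (θ * y i)) (Finset.univ : Finset (Fin N))
    (fun i _ => (Real.exp_pos _).le) K
  rw [Finset.card_univ, Fintype.card_fin] at hmac
  set c : ℝ := (Real.exp θ - 1) * S / N with hcd
  have hc0 : 0 ≤ c := by
    have : (1:ℝ) ≤ Real.exp θ := by
      rw [← Real.exp_zero]; exact Real.exp_le_exp.2 hθ0
    rw [hcd]; exact div_nonneg (mul_nonneg (by linarith) hS) hNpos.le
  have hZN : Z ≤ (N:ℝ) * (1 + c) := by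
    have h1 : Z ≤ ∑ i : Fin N, (1 + (Real.exp θ - 1) * y i) :=
      Finset.sum_le_sum fun i _ => expconv hθ0 (hy0 i) (hy1 i)
    have h2 : ∑ i : Fin N, (1 + (Real.exp θ - 1) * y i) = (N:ℝ) + (Real.exp θ - 1) * S := by
      rw [Finset.sum_add_distrib, ← Finset.mul_sum]
      simp [hSd]
    have h3 : (N:ℝ) * (1 + c) = (N:ℝ) + (Real.exp θ - 1) * S := by
      rw [hcd]; field_simp
    linarith
  have hZ0 : 0 ≤ Z := Finset.sum_nonneg fun i _ => (Real.exp_pos _).le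
  have hsum_le : ∑ Q ∈ Finset.powersetCard K (Finset.univ : Finset (Fin N)), ∏ i ∈ Q, Real.exp (θ * y i)
      ≤ (N.choose K : ℝ) * (1 + c)^K := by
    have hpow : Z^K ≤ ((N:ℝ) * (1+c))^K := pow_le_pow_left₀ hZ0 hZN K
    have h4 : ((N:ℝ)^K) * ∑ Q ∈ Finset.powersetCard K (Finset.univ : Finset (Fin N)), ∏ i ∈ Q, Real.exp (θ * y i)
        ≤ (N.choose K : ℝ) * ((N:ℝ) * (1+c))^K := le_trans hmac (by
          exact mul_le_mul_of_nonneg_left hpow (by positivity))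
    rw [mul_pow] at h4
    have hNK : (0:ℝ) < (N:ℝ)^K := by positivity
    nlinarith [h4]
  have hone : (1 + c)^K ≤ Real.exp (c * K) := by
    calc (1 + c)^K ≤ (Real.exp c)^K := by
          apply pow_le_pow_left₀ (by linarith) (by linarith [Real.add_one_le_exp c]) K
      _ = Real.exp (c * K) := by rw [← Real.exp_nat_mul, mul_comm]
  have main : (F.card : ℝ) * Real.exp (θ * t) ≤ (N.choose K : ℝ) * Real.exp (c * K) := by
    calc (F.card : ℝ) * Real.exp (θ * t) ≤ _ := step1
      _ ≤ _ := step2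
      _ = _ := step3
      _ ≤ (N.choose K : ℝ) * (1 + c)^K := hsum_le
      _ ≤ (N.choose K : ℝ) * Real.exp (c * K) :=
          mul_le_mul_of_nonneg_left hone (by positivity)
  have hdiv : (F.card : ℝ) ≤ (N.choose K : ℝ) * Real.exp (c * K - θ * t) := by
    rw [Real.exp_sub, ← mul_div_assoc]
    exact (le_div_iff₀ (Real.exp_pos _)).2 main
  have heq : c*(K:ℝ) - θ*t = ((K:ℝ)*S/(N:ℝ))*(Real.exp θ - 1 - θ*Real.exp θ) := by
    rw [hcd, htd]; field_simp
  have h2 : Real.exp θ - 1 - θ*Real.exp θ ≤ -θ^2/2 := by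
    have hq := expquad hθ0 hθ1
    linarith
  have hfac : (0:ℝ) ≤ (K:ℝ)*S/(N:ℝ) := by positivity
  have hexp : c*(K:ℝ) - θ*t ≤ -(γ^2 * K * S)/(8*N) := by
    have h3 : ((K:ℝ)*S/(N:ℝ))*(Real.exp θ - 1 - θ*Real.exp θ) ≤ ((K:ℝ)*S/(N:ℝ))*(-θ^2/2) :=
      mul_le_mul_of_nonneg_left h2 hfac
    have h4 : ((K:ℝ)*S/(N:ℝ))*(-θ^2/2) = -(γ^2 * K * S)/(8*N) := by
      rw [hθd]; field_simp; ring
    rw [heq]; linarith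
  calc (F.card : ℝ) ≤ (N.choose K : ℝ) * Real.exp (c * K - θ * t) := hdiv
    _ ≤ (N.choose K : ℝ) * Real.exp (-(γ^2 * K * S)/(8*N)) :=
        mul_le_mul_of_nonneg_left (Real.exp_le_exp.2 hexp) (by positivity)


lemma fibercard (N K : ℕ) (Q : Finset (Fin N)) (hQK : Q.card = K) :
    ((Finset.powersetCard K (Finset.univ : Finset (Fin N))).filter
        (fun R => Disjoint Q R)).card = (N-K).choose K := by
  classical
  have hset : (Finset.powersetCard K (Finset.univ : Finset (Fin N))).filter
      (fun R => Disjoint Q R) = (Finset.univ \ Q).powersetCard K := by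
    ext R
    simp only [Finset.mem_filter, Finset.mem_powersetCard, Finset.subset_sdiff]
    constructor
    · rintro ⟨⟨h1, h2⟩, h3⟩; exact ⟨⟨h1, h3.symm⟩, h2⟩
    · rintro ⟨⟨h1, h3⟩, h2⟩; exact ⟨⟨h1, h2⟩, h3.symm⟩
  rw [hset, Finset.card_powersetCard, Finset.card_sdiff_of_subset (Finset.subset_univ Q),
    Finset.card_univ, Fintype.card_fin, hQK]

lemma countFst (N K : ℕ) (P : Finset (Fin N) → Prop) [DecidablePred P] :
    (((Finset.powersetCard K (Finset.univ : Finset (Fin N))) ×ˢ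
        (Finset.powersetCard K (Finset.univ : Finset (Fin N)))).filter
        (fun p => Disjoint p.1 p.2 ∧ P p.1)).card
      = ((Finset.powersetCard K (Finset.univ : Finset (Fin N))).filter P).card * (N-K).choose K := by
  classical
  rw [Finset.card_eq_sum_card_fiberwise
    (f := Prod.fst) (t := (Finset.powersetCard K (Finset.univ : Finset (Fin N))).filter P)
    (fun p hp => by
      simp only [Finset.mem_coe, Finset.mem_filter, Finset.mem_product] at hp ⊢
      exact ⟨hp.1.1, hp.2.2⟩)]
  have hfib : ∀ Q ∈ (Finset.powersetCard K (Finset.univ : Finset (Fin N))).filter P,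
      ((((Finset.powersetCard K (Finset.univ : Finset (Fin N))) ×ˢ
        (Finset.powersetCard K (Finset.univ : Finset (Fin N)))).filter
        (fun p => Disjoint p.1 p.2 ∧ P p.1)).filter (fun p => p.1 = Q)).card
      = (N-K).choose K := by
    intro Q hQ
    rw [Finset.mem_filter, Finset.mem_powersetCard] at hQ
    have hQK : Q.card = K := hQ.1.2
    rw [← fibercard N K Q hQK]
    refine Finset.card_bij' (fun p _ => p.2) (fun R _ => (Q, R)) ?_ ?_ ?_ ?_
    · intro p hp
      simp only [Finset.mem_filter, Finset.mem_product] at hp ⊢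
      refine ⟨hp.1.1.2, ?_⟩
      rw [← hp.2]; exact hp.1.2.1
    · intro R hR
      simp only [Finset.mem_filter] at hR
      simp only [Finset.mem_filter, Finset.mem_product]
      exact ⟨⟨⟨Finset.mem_powersetCard.2 ⟨Finset.subset_univ Q, hQK⟩, hR.1⟩, hR.2, hQ.2⟩, trivial⟩
    · intro p hp
      simp only [Finset.mem_filter] at hp
      exact Prod.ext hp.2.symm rfl
    · intro R hR; rfl
  rw [Finset.sum_congr rfl hfib, Finset.sum_const, smul_eq_mul]

lemma countSnd (N K : ℕ) (P : Finset (Fin N) → Prop) [DecidablePred P] :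
    (((Finset.powersetCard K (Finset.univ : Finset (Fin N))) ×ˢ
        (Finset.powersetCard K (Finset.univ : Finset (Fin N)))).filter
        (fun p => Disjoint p.1 p.2 ∧ P p.2)).card
      = ((Finset.powersetCard K (Finset.univ : Finset (Fin N))).filter P).card * (N-K).choose K := by
  classical
  rw [Finset.card_eq_sum_card_fiberwise
    (f := Prod.snd) (t := (Finset.powersetCard K (Finset.univ : Finset (Fin N))).filter P)
    (fun p hp => by
      simp only [Finset.mem_coe, Finset.mem_filter, Finset.mem_product] at hp ⊢
      exact ⟨hp.1.2, hp.2.2⟩)]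
  have hfib : ∀ R ∈ (Finset.powersetCard K (Finset.univ : Finset (Fin N))).filter P,
      ((((Finset.powersetCard K (Finset.univ : Finset (Fin N))) ×ˢ
        (Finset.powersetCard K (Finset.univ : Finset (Fin N)))).filter
        (fun p => Disjoint p.1 p.2 ∧ P p.2)).filter (fun p => p.2 = R)).card
      = (N-K).choose K := by
    intro R hR
    rw [Finset.mem_filter, Finset.mem_powersetCard] at hR
    have hRK : R.card = K := hR.1.2
    rw [← fibercard N K R hRK]
    refine Finset.card_bij' (fun p _ => p.1) (fun Q _ => (Q, R)) ?_ ?_ ?_ ?_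
    · intro p hp
      simp only [Finset.mem_filter, Finset.mem_product] at hp ⊢
      refine ⟨hp.1.1.1, ?_⟩
      rw [← hp.2]; exact (hp.1.2.1).symm
    · intro Q hQ
      simp only [Finset.mem_filter] at hQ
      simp only [Finset.mem_filter, Finset.mem_product]
      exact ⟨⟨⟨hQ.1, Finset.mem_powersetCard.2 ⟨Finset.subset_univ R, hRK⟩⟩, hQ.2.symm, hR.2⟩, trivial⟩
    · intro p hp
      simp only [Finset.mem_filter] at hp
      exact Prod.ext rfl hp.2.symm
    · intro Q hQ; rfl
  rw [Finset.sum_congr rfl hfib, Finset.sum_const, smul_eq_mul]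

end Helpers

section Main
open Finset

open scoped Classical

lemma chern (N K : ℕ) (hN : 0 < N) (x : Fin N → ℝ) (M γ : ℝ)
    (hx0 : ∀ i, 0 ≤ x i) (hM : 0 < M) (hxM : ∀ i, x i ≤ M) (hγ0 : 0 < γ) (hγ1 : γ < 1) :
    (((Finset.powersetCard K (Finset.univ : Finset (Fin N))).filter
        (fun Q => Real.exp (γ/2) * ((K:ℝ)/(N:ℝ)) * (∑ i, x i) ≤ ∑ i ∈ Q, x i)).card : ℝ)
      ≤ (N.choose K : ℝ) * Real.exp (-(γ^2 * K * ((∑ i, x i)/M)) / (8*N)) := by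
  have h := chern01 N K hN (fun i => x i / M) γ (fun i => div_nonneg (hx0 i) hM.le)
    (fun i => (div_le_one hM).2 (hxM i)) hγ0 hγ1
  beta_reduce at h
  have hsd : ∑ i : Fin N, x i / M = (∑ i, x i)/M := by rw [Finset.sum_div]
  rw [hsd] at h
  have hfe : (Finset.powersetCard K (Finset.univ : Finset (Fin N))).filter
        (fun Q => Real.exp (γ/2) * ((K:ℝ)/(N:ℝ)) * ((∑ i, x i)/M) ≤ ∑ i ∈ Q, x i / M)
      = (Finset.powersetCard K (Finset.univ : Finset (Fin N))).filter
        (fun Q => Real.exp (γ/2) * ((K:ℝ)/(N:ℝ)) * (∑ i, x i) ≤ ∑ i ∈ Q, x i) := by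
    apply Finset.filter_congr
    intro Q _
    rw [← Finset.sum_div]
    have he : Real.exp (γ/2) * ((K:ℝ)/(N:ℝ)) * ((∑ i, x i)/M)
        = (Real.exp (γ/2) * ((K:ℝ)/(N:ℝ)) * (∑ i, x i))/M := by ring
    rw [he, div_le_div_iff_of_pos_right hM]
  rw [hfe] at h
  exact h

end Main
end Helpers

theorem stmt11 (N K : ℕ) (C γ : ℝ) (hC : 1 ≤ C) (hγ0 : 0 < γ) (hγ1 : γ < 1)
    (hK : 2 * K ≤ N)
    (u v : Fin N → ℝ) (hu : ∀ i, 0 ≤ u i) (hv : ∀ i, 0 ≤ v i)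
    (hu0 : u ≠ 0) (hv0 : v ≠ 0)
    (hratio : C * N ≤ (nl1 u / nlinf u) * (nl1 v / nlinf v)) :
    let Pairs : Finset (Finset (Fin N) × Finset (Fin N)) :=
      ((Finset.powersetCard K Finset.univ) ×ˢ (Finset.powersetCard K Finset.univ)).filter
        (fun p => Disjoint p.1 p.2)
    ((Pairs.filter (fun p =>
          Real.exp γ * ((K : ℝ) ^ 2 / (N : ℝ) ^ 2 * (nl1 u * nl1 v)) ≤
            ∑ i ∈ p.1, ∑ j ∈ p.2, u i * v j)).card : ℝ) / (Pairs.card : ℝ) ≤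
      2 * Real.exp (-(γ ^ 2 * C * K) / (8 * N)) := by
  intro Pairs
  have hPairsEq : Pairs = ((Finset.powersetCard K Finset.univ) ×ˢ
      (Finset.powersetCard K Finset.univ)).filter (fun p => Disjoint p.1 p.2) := rfl
  have hN : 0 < N := by
    rcases Nat.eq_zero_or_pos N with h | h
    · exfalso; apply hu0; subst h; funext i; exact i.elim0
    · exact h
  have hNR : (0:ℝ) < (N:ℝ) := by exact_mod_cast hN
  obtain ⟨iu, hiu⟩ : ∃ i, u i ≠ 0 := by
    by_contra h; push_neg at h; exact hu0 (funext h)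
  obtain ⟨iv, hiv⟩ : ∃ i, v i ≠ 0 := by
    by_contra h; push_neg at h; exact hv0 (funext h)
  have hbu : BddAbove (Set.range fun i => |u i|) := (Set.finite_range _).bddAbove
  have hbv : BddAbove (Set.range fun i => |v i|) := (Set.finite_range _).bddAbove
  have hMu : 0 < nlinf u := lt_of_lt_of_le (abs_pos.2 hiu) (le_ciSup hbu iu)
  have hMv : 0 < nlinf v := lt_of_lt_of_le (abs_pos.2 hiv) (le_ciSup hbv iv)
  have hui : ∀ i, u i ≤ nlinf u := fun i => (le_abs_self _).trans (le_ciSup hbu i)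
  have hvi : ∀ i, v i ≤ nlinf v := fun i => (le_abs_self _).trans (le_ciSup hbv i)
  have hS1u : nl1 u = ∑ i, u i := Finset.sum_congr rfl fun i _ => abs_of_nonneg (hu i)
  have hS1v : nl1 v = ∑ i, v i := Finset.sum_congr rfl fun i _ => abs_of_nonneg (hv i)
  have hSu_pos : 0 < nl1 u :=
    lt_of_lt_of_le (abs_pos.2 hiu)
      (Finset.single_le_sum (f := fun i => |u i|) (fun i _ => abs_nonneg _) (Finset.mem_univ iu))
  have hSv_pos : 0 < nl1 v :=
    lt_of_lt_of_le (abs_pos.2 hiv)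
      (Finset.single_le_sum (f := fun i => |v i|) (fun i _ => abs_nonneg _) (Finset.mem_univ iv))
  have hSu_leN : nl1 u ≤ (N:ℝ) * nlinf u := by
    calc nl1 u ≤ ∑ _i : Fin N, nlinf u :=
          Finset.sum_le_sum fun i _ => le_ciSup hbu i
      _ = (N:ℝ) * nlinf u := by
          rw [Finset.sum_const, Finset.card_univ, Fintype.card_fin, nsmul_eq_mul]
  have hSv_leN : nl1 v ≤ (N:ℝ) * nlinf v := by
    calc nl1 v ≤ ∑ _i : Fin N, nlinf v :=
          Finset.sum_le_sum fun i _ => le_ciSup hbv i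
      _ = (N:ℝ) * nlinf v := by
          rw [Finset.sum_const, Finset.card_univ, Fintype.card_fin, nsmul_eq_mul]
  set ru : ℝ := nl1 u / nlinf u with hrud
  set rv : ℝ := nl1 v / nlinf v with hrvd
  have hru_pos : 0 < ru := div_pos hSu_pos hMu
  have hrv_pos : 0 < rv := div_pos hSv_pos hMv
  have hru_leN : ru ≤ (N:ℝ) := (div_le_iff₀ hMu).2 (by linarith)
  have hrv_leN : rv ≤ (N:ℝ) := (div_le_iff₀ hMv).2 (by linarith)
  have hruC : C ≤ ru := by
    have h1 : C * rv ≤ C * (N:ℝ) := mul_le_mul_of_nonneg_left hrv_leN (by linarith)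
    have h2 : C * rv ≤ ru * rv := le_trans h1 hratio
    exact le_of_mul_le_mul_right h2 hrv_pos
  have hrvC : C ≤ rv := by
    have h1 : C * ru ≤ C * (N:ℝ) := mul_le_mul_of_nonneg_left hru_leN (by linarith)
    have h2 : C * ru ≤ rv * ru := by
      calc C * ru ≤ C * (N:ℝ) := h1
        _ ≤ ru * rv := hratio
        _ = rv * ru := mul_comm _ _
    exact le_of_mul_le_mul_right h2 hru_pos
  set ε : ℝ := Real.exp (-(γ ^ 2 * C * ↑K) / (8 * ↑N)) with hεd
  have hεmono : ∀ r : ℝ, C ≤ r → Real.exp (-(γ^2 * ↑K * r) / (8*↑N)) ≤ ε := by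
    intro r hr
    rw [hεd]
    apply Real.exp_le_exp.2
    apply (div_le_div_iff_of_pos_right (show (0:ℝ) < 8*↑N by positivity)).2
    have hKn : (0:ℝ) ≤ (K:ℝ) := Nat.cast_nonneg K
    nlinarith [mul_le_mul_of_nonneg_left hr (mul_nonneg (sq_nonneg γ) hKn)]
  -- Chernoff bounds
  have hcu := chern N K hN u (nlinf u) γ hu hMu hui hγ0 hγ1
  have hcv := chern N K hN v (nlinf v) γ hv hMv hvi hγ0 hγ1
  have hrueq : (∑ i, u i)/(nlinf u) = ru := by rw [hrud, hS1u]
  have hrveq : (∑ i, v i)/(nlinf v) = rv := by rw [hrvd, hS1v]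
  rw [hrueq] at hcu
  rw [hrveq] at hcv
  have hcu' : (((Finset.powersetCard K (Finset.univ : Finset (Fin N))).filter
      (fun Q => Real.exp (γ/2) * ((K:ℝ)/(N:ℝ)) * (∑ i, u i) ≤ ∑ i ∈ Q, u i)).card : ℝ)
      ≤ (N.choose K : ℝ) * ε :=
    le_trans hcu (mul_le_mul_of_nonneg_left (hεmono ru hruC) (Nat.cast_nonneg _))
  have hcv' : (((Finset.powersetCard K (Finset.univ : Finset (Fin N))).filter
      (fun Q => Real.exp (γ/2) * ((K:ℝ)/(N:ℝ)) * (∑ i, v i) ≤ ∑ i ∈ Q, v i)).card : ℝ)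
      ≤ (N.choose K : ℝ) * ε :=
    le_trans hcv (mul_le_mul_of_nonneg_left (hεmono rv hrvC) (Nat.cast_nonneg _))
  -- union bound
  set E := Pairs.filter (fun p =>
      Real.exp γ * ((K : ℝ) ^ 2 / (N : ℝ) ^ 2 * (nl1 u * nl1 v)) ≤
        ∑ i ∈ p.1, ∑ j ∈ p.2, u i * v j) with hEd
  set A := Pairs.filter (fun p =>
      Real.exp (γ/2) * ((K:ℝ)/(N:ℝ)) * (∑ i, u i) ≤ ∑ i ∈ p.1, u i) with hAd
  set B := Pairs.filter (fun p =>
      Real.exp (γ/2) * ((K:ℝ)/(N:ℝ)) * (∑ i, v i) ≤ ∑ j ∈ p.2, v j) with hBd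
  have hsub : E ⊆ A ∪ B := by
    intro p hp
    rw [hEd, Finset.mem_filter] at hp
    rcases le_or_gt (Real.exp (γ/2) * ((K:ℝ)/(N:ℝ)) * (∑ i, u i)) (∑ i ∈ p.1, u i) with hA1 | h1
    · exact Finset.mem_union_left _ (by rw [hAd]; exact Finset.mem_filter.2 ⟨hp.1, hA1⟩)
    rcases le_or_gt (Real.exp (γ/2) * ((K:ℝ)/(N:ℝ)) * (∑ i, v i)) (∑ j ∈ p.2, v j) with hB1 | h2
    · exact Finset.mem_union_right _ (by rw [hBd]; exact Finset.mem_filter.2 ⟨hp.1, hB1⟩)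
    exfalso
    have hu1 : 0 ≤ ∑ i ∈ p.1, u i := Finset.sum_nonneg fun i _ => hu i
    have hv1 : 0 ≤ ∑ j ∈ p.2, v j := Finset.sum_nonneg fun j _ => hv j
    have hprod : ∑ i ∈ p.1, ∑ j ∈ p.2, u i * v j
        = (∑ i ∈ p.1, u i) * (∑ j ∈ p.2, v j) := (Finset.sum_mul_sum _ _ _ _).symm
    have hlt := mul_lt_mul'' h1 h2 hu1 hv1
    have hTuv : (Real.exp (γ/2) * ((K:ℝ)/(N:ℝ)) * (∑ i, u i))
        * (Real.exp (γ/2) * ((K:ℝ)/(N:ℝ)) * (∑ i, v i))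
        = Real.exp γ * ((K : ℝ) ^ 2 / (N : ℝ) ^ 2 * (nl1 u * nl1 v)) := by
      rw [hS1u, hS1v, show Real.exp γ = Real.exp (γ/2) * Real.exp (γ/2) by
        rw [← Real.exp_add]; norm_num]
      field_simp
    rw [hprod] at hp
    rw [hTuv] at hlt
    linarith [hp.2]
  -- cardinalities
  have hAcard : A.card = ((Finset.powersetCard K (Finset.univ : Finset (Fin N))).filter
      (fun Q => Real.exp (γ/2) * ((K:ℝ)/(N:ℝ)) * (∑ i, u i) ≤ ∑ i ∈ Q, u i)).card
      * (N-K).choose K := by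
    rw [hAd, hPairsEq, Finset.filter_filter]
    exact countFst N K (fun Q => Real.exp (γ/2) * ((K:ℝ)/(N:ℝ)) * (∑ i, u i) ≤ ∑ i ∈ Q, u i)
  have hBcard : B.card = ((Finset.powersetCard K (Finset.univ : Finset (Fin N))).filter
      (fun Q => Real.exp (γ/2) * ((K:ℝ)/(N:ℝ)) * (∑ i, v i) ≤ ∑ i ∈ Q, v i)).card
      * (N-K).choose K := by
    rw [hBd, hPairsEq, Finset.filter_filter]
    exact countSnd N K (fun Q => Real.exp (γ/2) * ((K:ℝ)/(N:ℝ)) * (∑ i, v i) ≤ ∑ i ∈ Q, v i)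
  have hPcard : Pairs.card = N.choose K * (N-K).choose K := by
    have h1 := countFst N K (fun _ => True)
    simp only [and_true, Finset.filter_true] at h1
    rw [Finset.card_powersetCard, Finset.card_univ, Fintype.card_fin] at h1
    rw [hPairsEq]
    exact h1
  have hch1 : 0 < N.choose K := Nat.choose_pos (by omega)
  have hch2 : 0 < (N-K).choose K := Nat.choose_pos (by omega)
  have hPc : (0:ℝ) < (Pairs.card : ℝ) := by
    rw [hPcard]; push_cast; positivity
  rw [div_le_iff₀ hPc]
  have hEc : (E.card : ℝ) ≤ (A.card : ℝ) + (B.card : ℝ) := by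
    exact_mod_cast le_trans (Finset.card_le_card hsub) (Finset.card_union_le A B)
  calc (E.card : ℝ) ≤ (A.card : ℝ) + (B.card : ℝ) := hEc
    _ = (((Finset.powersetCard K (Finset.univ : Finset (Fin N))).filter
          (fun Q => Real.exp (γ/2) * ((K:ℝ)/(N:ℝ)) * (∑ i, u i) ≤ ∑ i ∈ Q, u i)).card : ℝ)
            * ((N-K).choose K : ℝ)
        + (((Finset.powersetCard K (Finset.univ : Finset (Fin N))).filter
          (fun Q => Real.exp (γ/2) * ((K:ℝ)/(N:ℝ)) * (∑ i, v i) ≤ ∑ i ∈ Q, v i)).card : ℝ)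
            * ((N-K).choose K : ℝ) := by
        rw [hAcard, hBcard]; push_cast; ring
    _ ≤ ((N.choose K : ℝ) * ε) * ((N-K).choose K : ℝ)
        + ((N.choose K : ℝ) * ε) * ((N-K).choose K : ℝ) := by
        gcongr
    _ = 2 * ε * ((N.choose K : ℝ) * ((N-K).choose K : ℝ)) := by ring
    _ = 2 * ε * (Pairs.card : ℝ) := by rw [hPcard]; push_cast; ring
end

section
/- Let u, v ∈ (ℝ_{≥0})^N be non-zero non-negative vectors satisfying (‖u‖₁/‖u‖_∞)(‖v‖₁/‖v‖_∞) ≥ CN with C ≥ 1. For K ≤ N/2, let (Q,R) be a uniformly random ordered pair of disjoint K-element subsets of [N]. Then for 0 < γ < 1: Pr[∑_{i∈Q}∑_{j∈R} u_i v_j ≤ e^{−γ}(K²/N²)‖u‖₁‖v‖₁] ≤ 2·exp(−γ²CK/(12N)). -/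
open scoped Classical

lemma binom_aux (s d : ℝ) (hs : 0 ≤ s) (hd : 0 ≤ d) :
    ∀ K : ℕ, s ^ (K + 1) + (K + 1) * s ^ K * d ≤ (s + d) ^ (K + 1) := by
  intro K
  induction K with
  | zero => simp
  | succ K ih =>
    have e : (s + d) * (s ^ (K + 1) + ((K:ℝ) + 1) * s ^ K * d)
        = s ^ (K + 1 + 1) + ((K:ℝ) + 1 + 1) * s ^ (K + 1) * d + ((K:ℝ) + 1) * (s ^ K * (d * d)) := by
      ring
    have h2 := mul_le_mul_of_nonneg_left ih (by linarith : (0:ℝ) ≤ s + d)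
    have hnn : (0:ℝ) ≤ ((K:ℝ) + 1) * (s ^ K * (d * d)) := by positivity
    push_cast
    calc s ^ (K + 1 + 1) + ((K:ℝ) + 1 + 1) * s ^ (K + 1) * d
        ≤ (s + d) * (s ^ (K + 1) + ((K:ℝ) + 1) * s ^ K * d) := by rw [e]; linarith
      _ ≤ (s + d) * (s + d) ^ (K + 1) := h2
      _ = (s + d) ^ (K + 1 + 1) := by ring

lemma step_aux (n K : ℕ) (M S' A B : ℝ) (hM : 0 ≤ M) (hS' : 0 ≤ S') (hMmax : S' ≤ n * M)
    (hA : A ≤ (n.choose (K + 1) : ℝ) * (S' / n) ^ (K + 1))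
    (hB : B ≤ (n.choose K : ℝ) * (S' / n) ^ K) :
    A + M * B ≤ ((n + 1).choose (K + 1) : ℝ) * ((S' + M) / (n + 1)) ^ (K + 1) := by
  rcases Nat.eq_zero_or_pos n with rfl | hn
  · -- n = 0 : S' = 0
    have hS0 : S' = 0 := le_antisymm (by simpa using hMmax) hS'
    subst hS0
    rcases Nat.eq_zero_or_pos K with rfl | hK
    · simp only [Nat.choose_self, Nat.cast_one] at hB ⊢
      simp only [Nat.choose_succ_self, Nat.cast_zero, zero_mul] at hA
      have : B ≤ 1 := by simpa using hB
      have h2 : M * B ≤ M := by nlinarith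
      simp only [Nat.cast_zero, zero_add, Nat.choose_self, Nat.cast_one, one_mul]
      calc A + M * B ≤ 0 + M := by linarith
        _ = (M / 1) ^ (0 + 1) := by simp
    · have h0 : (Nat.choose 0 (K + 1) : ℝ) = 0 := by simp
      have h1 : (Nat.choose 0 K : ℝ) = 0 := by
        rw [Nat.choose_eq_zero_of_lt hK]; simp
      have h2 : (Nat.choose 1 (K + 1) : ℝ) = 0 := by
        rw [Nat.choose_eq_zero_of_lt (by omega)]; simp
      rw [h0, zero_mul] at hA
      rw [h1, zero_mul] at hB
      have : M * B ≤ 0 := mul_nonpos_of_nonneg_of_nonpos hM hB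
      simp only [Nat.cast_zero, zero_add, h2, zero_mul]
      linarith
  · have hn0 : (0:ℝ) < n := by exact_mod_cast hn
    set s : ℝ := S' / n with hs_def
    set μ : ℝ := (S' + M) / (n + 1) with hμ_def
    set d : ℝ := μ - s with hd_def
    have hs : 0 ≤ s := div_nonneg hS' hn0.le
    have hd : 0 ≤ d := by
      have : s ≤ μ := by
        rw [hs_def, hμ_def, div_le_div_iff₀ hn0 (by linarith)]
        nlinarith
      linarith
    have hMd : M = s + (n + 1) * d := by
      rw [hd_def, hμ_def, hs_def]; field_simp; ring
    have pascal : (((n + 1).choose (K + 1) : ℕ) : ℝ) = (n.choose (K + 1) : ℝ) + (n.choose K : ℝ) := by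
      rw [Nat.choose_succ_succ']; push_cast; ring
    have succmul : ((n:ℝ) + 1) * (n.choose K : ℝ) = ((n + 1).choose (K + 1) : ℝ) * ((K:ℝ) + 1) := by
      have h := Nat.add_one_mul_choose_eq n K
      have h2 : ((Nat.succ n * n.choose K : ℕ) : ℝ) = ((Nat.succ n).choose (K + 1) * Nat.succ K : ℕ) := by
        exact_mod_cast congrArg (fun m : ℕ => (m : ℝ)) h
      push_cast at h2
      linarith
    have hMB : M * B ≤ M * ((n.choose K : ℝ) * s ^ K) := mul_le_mul_of_nonneg_left hB hM
    have key : A + M * B ≤ ((n + 1).choose (K + 1) : ℝ) * (s ^ (K + 1) + ((K:ℝ) + 1) * s ^ K * d) := by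
      have expand : (n.choose (K + 1) : ℝ) * s ^ (K + 1) + (s + ((n:ℝ) + 1) * d) * ((n.choose K : ℝ) * s ^ K)
          = ((n.choose (K + 1) : ℝ) + (n.choose K : ℝ)) * s ^ (K + 1)
            + (((n:ℝ) + 1) * (n.choose K : ℝ)) * d * s ^ K := by ring
      calc A + M * B ≤ (n.choose (K + 1) : ℝ) * s ^ (K + 1) + M * ((n.choose K : ℝ) * s ^ K) := by
            linarith
        _ = (n.choose (K + 1) : ℝ) * s ^ (K + 1) + (s + ((n:ℝ) + 1) * d) * ((n.choose K : ℝ) * s ^ K) := by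
            rw [← hMd]
        _ = ((n.choose (K + 1) : ℝ) + (n.choose K : ℝ)) * s ^ (K + 1)
            + (((n:ℝ) + 1) * (n.choose K : ℝ)) * d * s ^ K := expand
        _ = ((n + 1).choose (K + 1) : ℝ) * (s ^ (K + 1) + ((K:ℝ) + 1) * s ^ K * d) := by
            rw [succmul, pascal]; ring
    have hbin := binom_aux s d hs hd K
    have hfin : ((n + 1).choose (K + 1) : ℝ) * (s ^ (K + 1) + ((K:ℝ) + 1) * s ^ K * d)
        ≤ ((n + 1).choose (K + 1) : ℝ) * (s + d) ^ (K + 1) :=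
      mul_le_mul_of_nonneg_left hbin (by positivity)
    have : s + d = μ := by rw [hd_def]; ring
    rw [this] at hfin
    push_cast at hfin ⊢
    linarith

lemma maclaurin_s12 {ι : Type*} [DecidableEq ι] (z : ι → ℝ) (hz : ∀ i, 0 ≤ z i) :
    ∀ (T : Finset ι) (K : ℕ),
      (∑ Q ∈ T.powersetCard K, ∏ i ∈ Q, z i)
        ≤ (T.card.choose K : ℝ) * ((∑ i ∈ T, z i) / (T.card : ℝ)) ^ K := by
  intro T
  induction T using Finset.strongInduction with
  | _ T ih =>
    intro K
    match K with
    | 0 => simp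
    | K + 1 =>
      rcases T.eq_empty_or_nonempty with rfl | hne
      · rw [Finset.powersetCard_eq_empty.2 (by simp)]
        simp
      obtain ⟨i₀, hi₀, hmax⟩ := Finset.exists_max_image T z hne
      have hins : insert i₀ (T.erase i₀) = T := Finset.insert_erase hi₀
      have hnm : i₀ ∉ T.erase i₀ := Finset.notMem_erase _ _
      set T' := T.erase i₀ with hT'
      have hss : T' ⊂ T := Finset.erase_ssubset hi₀
      have hcard : T.card = T'.card + 1 := by
        rw [← hins, Finset.card_insert_of_notMem hnm]
      have hsplit : (∑ Q ∈ T.powersetCard (K + 1), ∏ i ∈ Q, z i)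
          = (∑ Q ∈ T'.powersetCard (K + 1), ∏ i ∈ Q, z i)
            + z i₀ * (∑ Q ∈ T'.powersetCard K, ∏ i ∈ Q, z i) := by
        rw [← hins, Finset.powersetCard_succ_insert hnm, Finset.sum_union, Finset.sum_image]
        · rw [Finset.mul_sum]
          congr 1
          apply Finset.sum_congr rfl
          intro Q hQ
          have hq : i₀ ∉ Q := fun h => hnm ((Finset.mem_powersetCard.1 hQ).1 h)
          rw [Finset.prod_insert hq]
        · intro Q hQ R hR h
          have hq : i₀ ∉ Q := fun h => hnm ((Finset.mem_powersetCard.1 hQ).1 h)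
          have hr : i₀ ∉ R := fun h => hnm ((Finset.mem_powersetCard.1 hR).1 h)
          have := congrArg (Finset.erase · i₀) h
          simpa [Finset.erase_insert, hq, hr] using this
        · rw [Finset.disjoint_right]
          intro Q hQ hQ'
          obtain ⟨R, hR, rfl⟩ := Finset.mem_image.1 hQ
          exact hnm ((Finset.mem_powersetCard.1 hQ').1 (Finset.mem_insert_self _ _))
      have hsum : ∑ i ∈ T, z i = (∑ i ∈ T', z i) + z i₀ := by
        rw [← hins, Finset.sum_insert hnm]; ring
      have hS' : 0 ≤ ∑ i ∈ T', z i := Finset.sum_nonneg fun i _ => hz i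
      have hMmax : (∑ i ∈ T', z i) ≤ T'.card * z i₀ := by
        calc (∑ i ∈ T', z i) ≤ ∑ _i ∈ T', z i₀ :=
              Finset.sum_le_sum fun i hi => hmax i (Finset.mem_of_mem_erase hi)
          _ = T'.card * z i₀ := by rw [Finset.sum_const, nsmul_eq_mul]
      have := step_aux T'.card K (z i₀) (∑ i ∈ T', z i)
        (∑ Q ∈ T'.powersetCard (K + 1), ∏ i ∈ Q, z i)
        (∑ Q ∈ T'.powersetCard K, ∏ i ∈ Q, z i)
        (hz i₀) hS' hMmax (ih T' hss (K + 1)) (ih T' hss K)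
      rw [hsplit, hsum, hcard]
      convert this using 3 <;> push_cast <;> ring

lemma tail_bound (N K : ℕ) (hN : 0 < N) (w : Fin N → ℝ)
    (hw0 : ∀ i, 0 ≤ w i) (hw1 : ∀ i, w i ≤ 1) (s : ℝ) (hs : 0 ≤ s) :
    (((Finset.powersetCard K (Finset.univ : Finset (Fin N))).filter
        (fun Q => ∑ i ∈ Q, w i ≤ Real.exp (-s) * (K * (∑ i, w i) / N))).card : ℝ)
      ≤ (N.choose K : ℝ)
        * Real.exp (-(1 - (1 + s) * Real.exp (-s)) * (K * (∑ i, w i) / N)) := by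
  set W : ℝ := ∑ i, w i with hW
  have hW0 : 0 ≤ W := Finset.sum_nonneg fun i _ => hw0 i
  have hWN : W ≤ N := by
    calc W ≤ ∑ _i : Fin N, (1:ℝ) := Finset.sum_le_sum fun i _ => hw1 i
      _ = N := by simp
  set μ : ℝ := K * W / N with hμ
  have hμ0 : 0 ≤ μ := by positivity
  set pc := Finset.powersetCard K (Finset.univ : Finset (Fin N)) with hpc
  set F := pc.filter (fun Q => ∑ i ∈ Q, w i ≤ Real.exp (-s) * μ) with hF
  -- Markov step
  have markov : (F.card : ℝ) * Real.exp (-s * (Real.exp (-s) * μ))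
      ≤ ∑ Q ∈ F, Real.exp (-s * ∑ i ∈ Q, w i) := by
    have he : (F.card : ℝ) * Real.exp (-s * (Real.exp (-s) * μ))
        = ∑ _Q ∈ F, Real.exp (-s * (Real.exp (-s) * μ)) := by
      rw [Finset.sum_const, nsmul_eq_mul]
    rw [he]
    apply Finset.sum_le_sum
    intro Q hQ
    have hQle : ∑ i ∈ Q, w i ≤ Real.exp (-s) * μ := (Finset.mem_filter.1 hQ).2
    exact Real.exp_le_exp.2 (by nlinarith)
  have hsub : ∑ Q ∈ F, Real.exp (-s * ∑ i ∈ Q, w i)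
      ≤ ∑ Q ∈ pc, Real.exp (-s * ∑ i ∈ Q, w i) :=
    Finset.sum_le_sum_of_subset_of_nonneg (Finset.filter_subset _ _)
      (fun Q _ _ => (Real.exp_pos _).le)
  have hprod : ∀ Q : Finset (Fin N), Real.exp (-s * ∑ i ∈ Q, w i) = ∏ i ∈ Q, Real.exp (-s * w i) := by
    intro Q
    rw [← Real.exp_sum, Finset.mul_sum]
  have hmac := maclaurin_s12 (fun i => Real.exp (-s * w i)) (fun i => (Real.exp_pos _).le)
      (Finset.univ : Finset (Fin N)) K
  simp only [Finset.card_univ, Fintype.card_fin] at hmac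
  -- bound the average
  have hpt : ∀ i : Fin N, Real.exp (-s * w i) ≤ 1 - (1 - Real.exp (-s)) * w i := by
    intro i
    have hcvx := convexOn_exp.2 (Set.mem_univ (0:ℝ)) (Set.mem_univ (-s))
      (by linarith [hw1 i] : (0:ℝ) ≤ 1 - w i) (hw0 i) (by ring)
    simp only [smul_eq_mul, mul_zero, Real.exp_zero, mul_one] at hcvx
    calc Real.exp (-s * w i) = Real.exp ((1 - w i) * 0 + w i * (-s)) := by ring_nf
      _ ≤ (1 - w i) * 1 + w i * Real.exp (-s) := by simpa using hcvx
      _ = 1 - (1 - Real.exp (-s)) * w i := by ring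
  have hZ : (∑ i, Real.exp (-s * w i)) ≤ N - (1 - Real.exp (-s)) * W := by
    calc (∑ i, Real.exp (-s * w i)) ≤ ∑ i, (1 - (1 - Real.exp (-s)) * w i) :=
          Finset.sum_le_sum fun i _ => hpt i
      _ = N - (1 - Real.exp (-s)) * W := by
          rw [Finset.sum_sub_distrib, ← Finset.mul_sum]
          simp [hW]
  have hc1 : Real.exp (-s) ≤ 1 := Real.exp_le_one_iff.2 (by linarith)
  have hq0 : 0 ≤ 1 - (1 - Real.exp (-s)) * (W / N) := by
    have h1 : (1 - Real.exp (-s)) * (W / N) ≤ 1 * 1 := by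
      apply mul_le_mul (by linarith [(Real.exp_pos (-s)).le])
        (by rw [div_le_one (by exact_mod_cast hN)]; exact hWN) (by positivity) one_pos.le
    linarith
  have havg : (∑ i, Real.exp (-s * w i)) / N ≤ 1 - (1 - Real.exp (-s)) * (W / N) := by
    rw [div_le_iff₀ (by exact_mod_cast hN : (0:ℝ) < N)]
    have : (1 - (1 - Real.exp (-s)) * (W / N)) * N = N - (1 - Real.exp (-s)) * W := by
      field_simp
    linarith [hZ, this.symm.le, this.ge]
  have hpow : ((∑ i, Real.exp (-s * w i)) / N) ^ K
      ≤ Real.exp (-(1 - Real.exp (-s)) * (W / N)) ^ K := by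
    apply pow_le_pow_left₀ (by positivity)
    calc (∑ i, Real.exp (-s * w i)) / N ≤ 1 - (1 - Real.exp (-s)) * (W / N) := havg
      _ ≤ Real.exp (-(1 - Real.exp (-s)) * (W / N)) := by
          have := Real.add_one_le_exp (-(1 - Real.exp (-s)) * (W / N))
          linarith
  have hexpk : Real.exp (-(1 - Real.exp (-s)) * (W / N)) ^ K
      = Real.exp (-(1 - Real.exp (-s)) * μ) := by
    rw [← Real.exp_nat_mul]
    congr 1
    rw [hμ]; field_simp
  have main : (F.card : ℝ) * Real.exp (-s * (Real.exp (-s) * μ))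
      ≤ (N.choose K : ℝ) * Real.exp (-(1 - Real.exp (-s)) * μ) := by
    calc (F.card : ℝ) * Real.exp (-s * (Real.exp (-s) * μ)) ≤ ∑ Q ∈ F, Real.exp (-s * ∑ i ∈ Q, w i) := markov
      _ ≤ ∑ Q ∈ pc, Real.exp (-s * ∑ i ∈ Q, w i) := hsub
      _ = ∑ Q ∈ pc, ∏ i ∈ Q, Real.exp (-s * w i) := Finset.sum_congr rfl fun Q _ => hprod Q
      _ ≤ (N.choose K : ℝ) * ((∑ i, Real.exp (-s * w i)) / N) ^ K := hmac
      _ ≤ (N.choose K : ℝ) * Real.exp (-(1 - Real.exp (-s)) * μ) := by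
          rw [← hexpk]
          exact mul_le_mul_of_nonneg_left hpow (by positivity)
  have hepos : (0:ℝ) < Real.exp (-s * (Real.exp (-s) * μ)) := Real.exp_pos _
  have hEeq : Real.exp (-(1 - Real.exp (-s)) * μ)
      = Real.exp (-(1 - (1 + s) * Real.exp (-s)) * μ) * Real.exp (-s * (Real.exp (-s) * μ)) := by
    rw [← Real.exp_add]; congr 1; ring
  rw [hEeq] at main
  rw [show (N.choose K : ℝ) * (Real.exp (-(1 - (1 + s) * Real.exp (-s)) * μ) * Real.exp (-s * (Real.exp (-s) * μ)))
      = ((N.choose K : ℝ) * Real.exp (-(1 - (1 + s) * Real.exp (-s)) * μ)) * Real.exp (-s * (Real.exp (-s) * μ)) from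
    (mul_assoc _ _ _).symm] at main
  exact le_of_mul_le_mul_right main hepos

lemma card_prod_filter {α β : Type*} (s : Finset α) (t : Finset β) (P : α → β → Prop)
    [DecidablePred fun p : α × β => P p.1 p.2] [∀ x, DecidablePred (P x)] :
    ((s ×ˢ t).filter (fun p => P p.1 p.2)).card
      = ∑ x ∈ s, (t.filter (fun y => P x y)).card := by
  rw [Finset.card_filter, Finset.sum_product]
  exact Finset.sum_congr rfl fun x _ => by rw [Finset.card_filter]

lemma card_prod_filter' {α β : Type*} (s : Finset α) (t : Finset β) (P : α → β → Prop)
    [DecidablePred fun p : α × β => P p.1 p.2] [∀ y, DecidablePred (fun x => P x y)] :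
    ((s ×ˢ t).filter (fun p => P p.1 p.2)).card
      = ∑ y ∈ t, (s.filter (fun x => P x y)).card := by
  rw [Finset.card_filter, Finset.sum_product_right]
  exact Finset.sum_congr rfl fun y _ => by rw [Finset.card_filter]

lemma count_disjoint (N K : ℕ) (Q : Finset (Fin N)) (hQ : Q.card = K)
    [DecidablePred fun R : Finset (Fin N) => Disjoint Q R] :
    ((Finset.powersetCard K (Finset.univ : Finset (Fin N))).filter
      (fun R => Disjoint Q R)).card = (N - K).choose K := by
  have : (Finset.powersetCard K (Finset.univ : Finset (Fin N))).filter (fun R => Disjoint Q R)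
      = Finset.powersetCard K Qᶜ := by
    ext R
    simp only [Finset.mem_filter, Finset.mem_powersetCard, Finset.subset_univ, true_and,
      Finset.subset_iff, Finset.mem_compl]
    constructor
    · rintro ⟨⟨-, hc⟩, hd⟩
      exact ⟨fun i hi => Finset.disjoint_right.1 hd hi, hc⟩
    · rintro ⟨hsub, hc⟩
      exact ⟨⟨fun i _ => Finset.mem_univ i, hc⟩, Finset.disjoint_right.2 fun i hi => hsub hi⟩
  rw [this, Finset.card_powersetCard, Finset.card_compl, hQ, Fintype.card_fin]

lemma exp_poly_bound (s : ℝ) (hs : 0 ≤ s) :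
    (1 + s) * Real.exp (-s) ≤ 1 - s ^ 2 / 2 + s ^ 3 / 3 := by
  have hP : 1 + s + s ^ 2 / 2 + s ^ 3 / 6 ≤ Real.exp s := by
    have h := Real.sum_le_exp_of_nonneg hs 4
    have e : ∑ i ∈ Finset.range 4, s ^ i / (Nat.factorial i : ℝ)
        = 1 + s + s ^ 2 / 2 + s ^ 3 / 6 := by
      norm_num [Finset.sum_range_succ, Nat.factorial]
    rwa [e] at h
  have hq : 0 ≤ 1 - s ^ 2 / 2 + s ^ 3 / 3 := by nlinarith [sq_nonneg s, sq_nonneg (s - 1), pow_nonneg hs 3]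
  have hkey : 1 + s ≤ (1 - s ^ 2 / 2 + s ^ 3 / 3) * Real.exp s := by
    have h2 : (1 - s ^ 2 / 2 + s ^ 3 / 3) * (1 + s + s ^ 2 / 2 + s ^ 3 / 6)
        ≤ (1 - s ^ 2 / 2 + s ^ 3 / 3) * Real.exp s := mul_le_mul_of_nonneg_left hP hq
    have h3 : 1 + s ≤ (1 - s ^ 2 / 2 + s ^ 3 / 3) * (1 + s + s ^ 2 / 2 + s ^ 3 / 6) := by
      nlinarith [pow_nonneg hs 4, pow_nonneg hs 5, pow_nonneg hs 6]
    linarith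
  rw [Real.exp_neg]
  rw [mul_inv_le_iff₀ (Real.exp_pos s)]
  linarith [hkey]

lemma core_ineq (N : ℕ) (C γ x y : ℝ) (hN : 0 < N) (hγ0 : 0 < γ) (hγ1 : γ ≤ 1)
    (hx : 0 < x) (hy : 0 < y) (hx2 : x ^ 2 ≤ N) (hy2 : y ^ 2 ≤ N)
    (hC : C * N ≤ x ^ 2 * y ^ 2) :
    γ ^ 2 * C / 12 ≤ (1 - (1 + γ * (y / (x + y))) * Real.exp (-(γ * (y / (x + y))))) * x ^ 2 := by
  have hxy : 0 < x + y := by linarith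
  set θ : ℝ := y / (x + y) with hθ
  have hθ0 : 0 < θ := div_pos hy hxy
  have hθ1 : θ ≤ 1 := by rw [hθ, div_le_one hxy]; linarith
  set s : ℝ := γ * θ with hs_def
  have hs0 : 0 ≤ s := by positivity
  have hf : s ^ 2 / 2 - s ^ 3 / 3 ≤ 1 - (1 + s) * Real.exp (-s) := by
    have := exp_poly_bound s hs0
    linarith
  have hγ3 : γ ^ 3 * θ ^ 3 ≤ γ ^ 2 * θ ^ 3 := by
    have : γ ^ 3 ≤ γ ^ 2 := by nlinarith
    nlinarith [pow_pos hθ0 3]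
  have hstep1 : γ ^ 2 * (θ ^ 2 / 2 - θ ^ 3 / 3) ≤ s ^ 2 / 2 - s ^ 3 / 3 := by
    rw [hs_def]
    have e1 : (γ * θ) ^ 2 = γ ^ 2 * θ ^ 2 := by ring
    have e2 : (γ * θ) ^ 3 = γ ^ 3 * θ ^ 3 := by ring
    rw [e1, e2]
    linarith
  -- cube inequality
  have hNpos : (0:ℝ) < N := by exact_mod_cast hN
  have hxyN : x * y ≤ N := by nlinarith [sq_nonneg (x - y)]
  have hcube : (x + y) ^ 3 ≤ 2 * N * (3 * x + y) := by
    nlinarith [mul_nonneg (mul_nonneg hx.le hy.le) hy.le,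
      mul_le_mul_of_nonneg_left hx2 hy.le, mul_le_mul_of_nonneg_left hy2 hy.le,
      mul_le_mul_of_nonneg_left hx2 hx.le, mul_le_mul_of_nonneg_left hy2 hx.le,
      mul_le_mul_of_nonneg_left hxyN hx.le]
  have hθval : θ ^ 2 / 2 - θ ^ 3 / 3 = y ^ 2 * (3 * x + y) / (6 * (x + y) ^ 3) := by
    rw [hθ]; field_simp; ring
  have hmid : x ^ 2 * y ^ 2 / N / 12 ≤ (θ ^ 2 / 2 - θ ^ 3 / 3) * x ^ 2 := by
    rw [hθval, div_mul_eq_mul_div]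
    have e : x ^ 2 * y ^ 2 / (N:ℝ) / 12 = x ^ 2 * y ^ 2 / (12 * N) := by
      rw [div_div]
      ring_nf
    rw [e, div_le_div_iff₀ (by positivity) (by positivity)]
    have h := mul_le_mul_of_nonneg_left hcube (by positivity : (0:ℝ) ≤ x ^ 2 * y ^ 2)
    calc x ^ 2 * y ^ 2 * (6 * (x + y) ^ 3) = 6 * (x ^ 2 * y ^ 2 * (x + y) ^ 3) := by ring
      _ ≤ 6 * (x ^ 2 * y ^ 2 * (2 * N * (3 * x + y))) := by linarith
      _ = y ^ 2 * (3 * x + y) * x ^ 2 * (12 * N) := by ring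
  have hCmid : γ ^ 2 * C / 12 ≤ γ ^ 2 * ((θ ^ 2 / 2 - θ ^ 3 / 3) * x ^ 2) := by
    have h1 : C / 12 ≤ (θ ^ 2 / 2 - θ ^ 3 / 3) * x ^ 2 := by
      have : C ≤ x ^ 2 * y ^ 2 / N := by rw [le_div_iff₀ hNpos]; linarith
      calc C / 12 ≤ x ^ 2 * y ^ 2 / N / 12 := by linarith
        _ ≤ _ := hmid
    calc γ ^ 2 * C / 12 = γ ^ 2 * (C / 12) := by ring
      _ ≤ γ ^ 2 * ((θ ^ 2 / 2 - θ ^ 3 / 3) * x ^ 2) := mul_le_mul_of_nonneg_left h1 (sq_nonneg γ)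
  calc γ ^ 2 * C / 12 ≤ γ ^ 2 * ((θ ^ 2 / 2 - θ ^ 3 / 3) * x ^ 2) := hCmid
    _ = (γ ^ 2 * (θ ^ 2 / 2 - θ ^ 3 / 3)) * x ^ 2 := by ring
    _ ≤ (s ^ 2 / 2 - s ^ 3 / 3) * x ^ 2 := mul_le_mul_of_nonneg_right hstep1 (sq_nonneg x)
    _ ≤ (1 - (1 + s) * Real.exp (-s)) * x ^ 2 := mul_le_mul_of_nonneg_right hf (sq_nonneg x)

theorem stmt12 (N K : ℕ) (C γ : ℝ) (hC : 1 ≤ C) (hγ0 : 0 < γ) (hγ1 : γ < 1)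
    (hK : 2 * K ≤ N)
    (u v : Fin N → ℝ) (hu : ∀ i, 0 ≤ u i) (hv : ∀ i, 0 ≤ v i)
    (hu0 : u ≠ 0) (hv0 : v ≠ 0)
    (hratio : C * N ≤ (nl1 u / nlinf u) * (nl1 v / nlinf v)) :
    let Pairs : Finset (Finset (Fin N) × Finset (Fin N)) :=
      ((Finset.powersetCard K Finset.univ) ×ˢ (Finset.powersetCard K Finset.univ)).filter
        (fun p => Disjoint p.1 p.2)
    ((Pairs.filter (fun p =>
          ∑ i ∈ p.1, ∑ j ∈ p.2, u i * v j ≤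
            Real.exp (-γ) * ((K : ℝ) ^ 2 / (N : ℝ) ^ 2 * (nl1 u * nl1 v)))).card : ℝ) /
        (Pairs.card : ℝ) ≤
      2 * Real.exp (-(γ ^ 2 * C * K) / (12 * N)) := by
  intro Pairs
  -- N positive
  have hN : 0 < N := by
    rcases Nat.eq_zero_or_pos N with h0 | h
    · exfalso; subst h0; exact hu0 (Subsingleton.elim u 0)
    · exact h
  have hNR : (0:ℝ) < N := by exact_mod_cast hN
  have hKN : K ≤ N := by omega
  have hKNK : K ≤ N - K := by omega
  -- basic facts about u
  have key : ∀ (f : Fin N → ℝ), (∀ i, 0 ≤ f i) → f ≠ 0 →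
      (nl1 f = ∑ i, f i) ∧ (0 < nlinf f) ∧ (∀ i, f i ≤ nlinf f) ∧ (0 < nl1 f)
        ∧ (nl1 f ≤ N * nlinf f) := by
    intro f hf hf0
    have hL : nl1 f = ∑ i, f i :=
      Finset.sum_congr rfl fun i _ => abs_of_nonneg (hf i)
    have hle : ∀ i, f i ≤ nlinf f := by
      intro i
      have h2 : |f i| ≤ ⨆ j, |f j| :=
        le_ciSup (f := fun j => |f j|) (Set.Finite.bddAbove (Set.finite_range _)) i
      exact (le_abs_self _).trans h2
    obtain ⟨i₀, hi₀⟩ : ∃ i, f i ≠ 0 := by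
      by_contra h; push_neg at h; exact hf0 (funext h)
    have hpos : 0 < f i₀ := lt_of_le_of_ne (hf i₀) (Ne.symm hi₀)
    have hM : 0 < nlinf f := lt_of_lt_of_le hpos (hle i₀)
    have hL0 : 0 < nl1 f := by
      rw [hL]
      exact lt_of_lt_of_le hpos
        (Finset.single_le_sum (fun i _ => hf i) (Finset.mem_univ i₀))
    have hLN : nl1 f ≤ N * nlinf f := by
      rw [hL]
      calc (∑ i, f i) ≤ ∑ _i : Fin N, nlinf f := Finset.sum_le_sum fun i _ => hle i
        _ = N * nlinf f := by rw [Finset.sum_const, nsmul_eq_mul, Finset.card_univ,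
            Fintype.card_fin]
    exact ⟨hL, hM, hle, hL0, hLN⟩
  obtain ⟨hLu, hMu, hule, hLu0, hLuN⟩ := key u hu hu0
  obtain ⟨hLv, hMv, hvle, hLv0, hLvN⟩ := key v hv hv0
  set a : ℝ := nl1 u / nlinf u with ha_def
  set b : ℝ := nl1 v / nlinf v with hb_def
  have ha0 : 0 < a := div_pos hLu0 hMu
  have hb0 : 0 < b := div_pos hLv0 hMv
  have haN : a ≤ N := by rw [ha_def, div_le_iff₀ hMu]; linarith
  have hbN : b ≤ N := by rw [hb_def, div_le_iff₀ hMv]; linarith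
  set x : ℝ := Real.sqrt a with hx_def
  set y : ℝ := Real.sqrt b with hy_def
  have hx0 : 0 < x := Real.sqrt_pos.2 ha0
  have hy0 : 0 < y := Real.sqrt_pos.2 hb0
  have hx2 : x ^ 2 = a := Real.sq_sqrt ha0.le
  have hy2 : y ^ 2 = b := Real.sq_sqrt hb0.le
  have hx2N : x ^ 2 ≤ N := by rw [hx2]; exact haN
  have hy2N : y ^ 2 ≤ N := by rw [hy2]; exact hbN
  have habC : C * N ≤ x ^ 2 * y ^ 2 := by rw [hx2, hy2]; exact hratio
  have hxy : 0 < x + y := by linarith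
  set su : ℝ := γ * (y / (x + y)) with hsu_def
  set sv : ℝ := γ * (x / (x + y)) with hsv_def
  have hsu0 : 0 ≤ su := by positivity
  have hsv0 : 0 ≤ sv := by positivity
  have hsum : su + sv = γ := by
    rw [hsu_def, hsv_def]
    field_simp
    ring
  -- core inequalities
  have hcore_u : γ ^ 2 * C / 12 ≤ (1 - (1 + su) * Real.exp (-su)) * a := by
    rw [← hx2]
    exact core_ineq N C γ x y hN hγ0 hγ1.le hx0 hy0 hx2N hy2N habC
  have hcore_v : γ ^ 2 * C / 12 ≤ (1 - (1 + sv) * Real.exp (-sv)) * b := by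
    rw [← hy2]
    have h := core_ineq N C γ y x hN hγ0 hγ1.le hy0 hx0 hy2N hx2N (by linarith [habC])
    rw [show y + x = x + y by ring] at h
    exact h
  -- notation
  set pc := Finset.powersetCard K (Finset.univ : Finset (Fin N)) with hpc_def
  set T : ℝ := Real.exp (-(γ ^ 2 * C * K) / (12 * N)) with hT_def
  set τu : ℝ := Real.exp (-su) * ((K : ℝ) * nl1 u / N) with hτu_def
  set τv : ℝ := Real.exp (-sv) * ((K : ℝ) * nl1 v / N) with hτv_def
  have hτu0 : 0 ≤ τu := by
    apply mul_nonneg (Real.exp_nonneg _)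
    exact div_nonneg (mul_nonneg (Nat.cast_nonneg K) hLu0.le) (Nat.cast_nonneg N)
  have hτv0 : 0 ≤ τv := by
    apply mul_nonneg (Real.exp_nonneg _)
    exact div_nonneg (mul_nonneg (Nat.cast_nonneg K) hLv0.le) (Nat.cast_nonneg N)
  -- union bound
  have hPdef : Pairs = (pc ×ˢ pc).filter (fun p => Disjoint p.1 p.2) := rfl
  have hsub : Pairs.filter (fun p =>
          ∑ i ∈ p.1, ∑ j ∈ p.2, u i * v j ≤
            Real.exp (-γ) * ((K : ℝ) ^ 2 / (N : ℝ) ^ 2 * (nl1 u * nl1 v)))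
      ⊆ Pairs.filter (fun p => (∑ i ∈ p.1, u i) ≤ τu ∨ (∑ j ∈ p.2, v j) ≤ τv) := by
    intro p hp
    rw [Finset.mem_filter] at hp ⊢
    refine ⟨hp.1, ?_⟩
    by_contra hcon
    push_neg at hcon
    obtain ⟨h1, h2⟩ := hcon
    have hprod : τu * τv < (∑ i ∈ p.1, u i) * (∑ j ∈ p.2, v j) :=
      mul_lt_mul'' h1 h2 hτu0 hτv0
    have hEeq : ∑ i ∈ p.1, ∑ j ∈ p.2, u i * v j
        = (∑ i ∈ p.1, u i) * (∑ j ∈ p.2, v j) := by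
      rw [Finset.sum_mul_sum]
    have hτeq : τu * τv = Real.exp (-γ) * ((K : ℝ) ^ 2 / (N : ℝ) ^ 2 * (nl1 u * nl1 v)) := by
      rw [hτu_def, hτv_def]
      rw [show Real.exp (-su) * ((K : ℝ) * nl1 u / N) * (Real.exp (-sv) * ((K : ℝ) * nl1 v / N))
          = (Real.exp (-su) * Real.exp (-sv)) * (((K : ℝ) * nl1 u / N) * ((K : ℝ) * nl1 v / N)) by ring]
      rw [← Real.exp_add, show -su + -sv = -γ by linarith]
      ring
    have := hp.2
    rw [hEeq] at this
    rw [hτeq] at hprod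
    linarith
  -- counting
  have hpc_card : pc.card = N.choose K := by
    rw [hpc_def, Finset.card_powersetCard, Finset.card_univ, Fintype.card_fin]
  have hPairs_card : Pairs.card = N.choose K * (N - K).choose K := by
    rw [hPdef, card_prod_filter pc pc (fun Q R => Disjoint Q R)]
    rw [Finset.sum_congr rfl (fun Q hQ => count_disjoint N K Q
      (Finset.mem_powersetCard.1 hQ).2)]
    rw [Finset.sum_const, smul_eq_mul, hpc_card]
  have hA_card : (Pairs.filter (fun p => (∑ i ∈ p.1, u i) ≤ τu)).card
      = (pc.filter (fun Q => (∑ i ∈ Q, u i) ≤ τu)).card * (N - K).choose K := by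
    have e1 : Pairs.filter (fun p => (∑ i ∈ p.1, u i) ≤ τu)
        = (pc ×ˢ pc).filter (fun p => Disjoint p.1 p.2 ∧ (∑ i ∈ p.1, u i) ≤ τu) := by
      rw [hPdef, Finset.filter_filter]
    rw [e1, card_prod_filter pc pc (fun Q R => Disjoint Q R ∧ (∑ i ∈ Q, u i) ≤ τu)]
    have e2 : ∀ Q ∈ pc, (pc.filter (fun R => Disjoint Q R ∧ (∑ i ∈ Q, u i) ≤ τu)).card
        = if (∑ i ∈ Q, u i) ≤ τu then (N - K).choose K else 0 := by
      intro Q hQ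
      by_cases hA : (∑ i ∈ Q, u i) ≤ τu
      · rw [if_pos hA]
        have efil : pc.filter (fun R => Disjoint Q R ∧ (∑ i ∈ Q, u i) ≤ τu)
            = pc.filter (fun R => Disjoint Q R) :=
          Finset.filter_congr (fun R _ => by simp [hA])
        rw [efil]
        exact count_disjoint N K Q (Finset.mem_powersetCard.1 hQ).2
      · rw [if_neg hA]
        rw [Finset.card_eq_zero, Finset.filter_eq_empty_iff]
        exact fun _ _ hp => hA hp.2
    rw [Finset.sum_congr rfl e2, Finset.sum_ite, Finset.sum_const, Finset.sum_const_zero,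
      add_zero, smul_eq_mul]
  have hB_card : (Pairs.filter (fun p => (∑ j ∈ p.2, v j) ≤ τv)).card
      = (pc.filter (fun R => (∑ j ∈ R, v j) ≤ τv)).card * (N - K).choose K := by
    have e1 : Pairs.filter (fun p => (∑ j ∈ p.2, v j) ≤ τv)
        = (pc ×ˢ pc).filter (fun p => Disjoint p.1 p.2 ∧ (∑ j ∈ p.2, v j) ≤ τv) := by
      rw [hPdef, Finset.filter_filter]
    rw [e1, card_prod_filter' pc pc (fun Q R => Disjoint Q R ∧ (∑ j ∈ R, v j) ≤ τv)]
    have e2 : ∀ R ∈ pc, (pc.filter (fun Q => Disjoint Q R ∧ (∑ j ∈ R, v j) ≤ τv)).card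
        = if (∑ j ∈ R, v j) ≤ τv then (N - K).choose K else 0 := by
      intro R hR
      by_cases hA : (∑ j ∈ R, v j) ≤ τv
      · rw [if_pos hA]
        have efil : pc.filter (fun Q => Disjoint Q R ∧ (∑ j ∈ R, v j) ≤ τv)
            = pc.filter (fun Q => Disjoint R Q) :=
          Finset.filter_congr (fun Q _ => by simp [hA, disjoint_comm])
        rw [efil]
        exact count_disjoint N K R (Finset.mem_powersetCard.1 hR).2
      · rw [if_neg hA]
        rw [Finset.card_eq_zero, Finset.filter_eq_empty_iff]
        exact fun _ _ hp => hA hp.2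
    rw [Finset.sum_congr rfl e2, Finset.sum_ite, Finset.sum_const, Finset.sum_const_zero,
      add_zero, smul_eq_mul]
  -- tail bounds
  have htail : ∀ (f : Fin N → ℝ), (∀ i, 0 ≤ f i) →
      (nl1 f = ∑ i, f i) → (0 < nlinf f) → (∀ i, f i ≤ nlinf f) → ∀ s : ℝ, 0 ≤ s →
      ((pc.filter (fun Q => (∑ i ∈ Q, f i) ≤ Real.exp (-s) * ((K : ℝ) * nl1 f / N))).card : ℝ)
        ≤ (N.choose K : ℝ)
          * Real.exp (-(1 - (1 + s) * Real.exp (-s)) * ((K : ℝ) * (nl1 f / nlinf f) / N)) := by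
    intro f hf hLf hMf hlef s hs
    set w : Fin N → ℝ := fun i => f i / nlinf f with hw_def
    have hw0 : ∀ i, 0 ≤ w i := fun i => div_nonneg (hf i) hMf.le
    have hw1 : ∀ i, w i ≤ 1 := fun i => by
      rw [hw_def]; exact div_le_one_of_le₀ (hlef i) hMf.le
    have hWsum : (∑ i, w i) = nl1 f / nlinf f := by
      rw [hw_def, ← Finset.sum_div, ← hLf]
    have hfeq : pc.filter (fun Q => (∑ i ∈ Q, f i) ≤ Real.exp (-s) * ((K : ℝ) * nl1 f / N))
        = pc.filter (fun Q => (∑ i ∈ Q, w i) ≤ Real.exp (-s) * ((K : ℝ) * (∑ i, w i) / N)) := by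
      apply Finset.filter_congr
      intro Q _
      rw [hWsum, hw_def]
      simp only
      rw [← Finset.sum_div]
      constructor
      · intro h
        rw [div_le_iff₀ hMf]
        calc (∑ i ∈ Q, f i) ≤ Real.exp (-s) * ((K : ℝ) * nl1 f / N) := h
          _ = Real.exp (-s) * ((K : ℝ) * (nl1 f / nlinf f) / N) * nlinf f := by
            field_simp
      · intro h
        rw [div_le_iff₀ hMf] at h
        calc (∑ i ∈ Q, f i) ≤ Real.exp (-s) * ((K : ℝ) * (nl1 f / nlinf f) / N) * nlinf f := h
          _ = Real.exp (-s) * ((K : ℝ) * nl1 f / N) := by field_simp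
    rw [hfeq]
    have h := tail_bound N K hN w hw0 hw1 s hs
    rw [← hWsum]
    exact h
  -- exponent comparison
  have hexp_comp : ∀ s z : ℝ, 0 < z → γ ^ 2 * C / 12 ≤ (1 - (1 + s) * Real.exp (-s)) * z →
      Real.exp (-(1 - (1 + s) * Real.exp (-s)) * ((K : ℝ) * z / N)) ≤ T := by
    intro s z hz hcore
    rw [hT_def]
    apply Real.exp_le_exp.2
    have h1 : γ ^ 2 * C / 12 * ((K : ℝ) / N) ≤ ((1 - (1 + s) * Real.exp (-s)) * z) * ((K : ℝ) / N) :=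
      mul_le_mul_of_nonneg_right hcore (by positivity)
    have e1 : γ ^ 2 * C / 12 * ((K : ℝ) / N) = γ ^ 2 * C * (K : ℝ) / (12 * N) := by ring
    have e2 : ((1 - (1 + s) * Real.exp (-s)) * z) * ((K : ℝ) / N)
        = (1 - (1 + s) * Real.exp (-s)) * ((K : ℝ) * z / N) := by ring
    rw [e1, e2] at h1
    have e3 : -(γ ^ 2 * C * (K:ℝ)) / (12 * (N:ℝ)) = -(γ ^ 2 * C * (K:ℝ) / (12 * (N:ℝ))) := by
      ring
    rw [e3]
    linarith
  have hub : ((pc.filter (fun Q => (∑ i ∈ Q, u i) ≤ τu)).card : ℝ) ≤ (N.choose K : ℝ) * T := by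
    have h := htail u hu hLu hMu hule su hsu0
    calc ((pc.filter (fun Q => (∑ i ∈ Q, u i) ≤ τu)).card : ℝ) ≤ _ := h
      _ ≤ (N.choose K : ℝ) * T := by
        apply mul_le_mul_of_nonneg_left _ (Nat.cast_nonneg _)
        exact hexp_comp su a ha0 hcore_u
  have hvb : ((pc.filter (fun R => (∑ j ∈ R, v j) ≤ τv)).card : ℝ) ≤ (N.choose K : ℝ) * T := by
    have h := htail v hv hLv hMv hvle sv hsv0
    calc ((pc.filter (fun R => (∑ j ∈ R, v j) ≤ τv)).card : ℝ) ≤ _ := h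
      _ ≤ (N.choose K : ℝ) * T := by
        apply mul_le_mul_of_nonneg_left _ (Nat.cast_nonneg _)
        exact hexp_comp sv b hb0 hcore_v
  -- assemble
  have hPc_pos : (0:ℝ) < (Pairs.card : ℝ) := by
    rw [hPairs_card]
    have h1 := Nat.choose_pos hKN
    have h2 := Nat.choose_pos hKNK
    push_cast
    positivity
  rw [div_le_iff₀ hPc_pos]
  have hcard1 : ((Pairs.filter (fun p =>
        ∑ i ∈ p.1, ∑ j ∈ p.2, u i * v j ≤
          Real.exp (-γ) * ((K : ℝ) ^ 2 / (N : ℝ) ^ 2 * (nl1 u * nl1 v)))).card : ℝ)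
      ≤ ((Pairs.filter (fun p => (∑ i ∈ p.1, u i) ≤ τu)).card : ℝ)
        + ((Pairs.filter (fun p => (∑ j ∈ p.2, v j) ≤ τv)).card : ℝ) := by
    have h1 := Finset.card_le_card hsub
    have h2 : (Pairs.filter (fun p => (∑ i ∈ p.1, u i) ≤ τu ∨ (∑ j ∈ p.2, v j) ≤ τv)).card
        ≤ (Pairs.filter (fun p => (∑ i ∈ p.1, u i) ≤ τu)).card
          + (Pairs.filter (fun p => (∑ j ∈ p.2, v j) ≤ τv)).card := by
      rw [Finset.filter_or]
      exact Finset.card_union_le _ _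
    exact_mod_cast le_trans h1 h2
  have hT0 : (0:ℝ) ≤ T := Real.exp_nonneg _
  calc ((Pairs.filter (fun p =>
        ∑ i ∈ p.1, ∑ j ∈ p.2, u i * v j ≤
          Real.exp (-γ) * ((K : ℝ) ^ 2 / (N : ℝ) ^ 2 * (nl1 u * nl1 v)))).card : ℝ)
      ≤ ((Pairs.filter (fun p => (∑ i ∈ p.1, u i) ≤ τu)).card : ℝ)
        + ((Pairs.filter (fun p => (∑ j ∈ p.2, v j) ≤ τv)).card : ℝ) := hcard1
    _ = ((pc.filter (fun Q => (∑ i ∈ Q, u i) ≤ τu)).card : ℝ) * ((N - K).choose K : ℝ)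
        + ((pc.filter (fun R => (∑ j ∈ R, v j) ≤ τv)).card : ℝ) * ((N - K).choose K : ℝ) := by
      rw [hA_card, hB_card]; push_cast; ring
    _ ≤ ((N.choose K : ℝ) * T) * ((N - K).choose K : ℝ)
        + ((N.choose K : ℝ) * T) * ((N - K).choose K : ℝ) := by
      have g1 := mul_le_mul_of_nonneg_right hub (Nat.cast_nonneg ((N - K).choose K) : (0:ℝ) ≤ _)
      have g2 := mul_le_mul_of_nonneg_right hvb (Nat.cast_nonneg ((N - K).choose K) : (0:ℝ) ≤ _)
      linarith
    _ = 2 * T * (Pairs.card : ℝ) := by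
      rw [hPairs_card]; push_cast; ring
end

section
/- If graphs G₀ and G₁ each admit a balanced proper 3-coloring, then their disjoint union G₀ ⊔ G₁ admits a balanced proper 3-coloring, possibly after permuting the colors in one of the colorings. -/
open scoped Classical

def P6 (e0 e1 e2 d0 d1 d2 : ℕ) : Prop :=
  let s := e0+e1+e2+d0+d1+d2
  (s/3 ≤ e0+d0 ∧ e0+d0 ≤ (s+2)/3 ∧ s/3 ≤ e1+d1 ∧ e1+d1 ≤ (s+2)/3 ∧ s/3 ≤ e2+d2 ∧ e2+d2 ≤ (s+2)/3) ∨
  (s/3 ≤ e0+d1 ∧ e0+d1 ≤ (s+2)/3 ∧ s/3 ≤ e1+d0 ∧ e1+d0 ≤ (s+2)/3 ∧ s/3 ≤ e2+d2 ∧ e2+d2 ≤ (s+2)/3) ∨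
  (s/3 ≤ e0+d2 ∧ e0+d2 ≤ (s+2)/3 ∧ s/3 ≤ e1+d1 ∧ e1+d1 ≤ (s+2)/3 ∧ s/3 ≤ e2+d0 ∧ e2+d0 ≤ (s+2)/3) ∨
  (s/3 ≤ e0+d0 ∧ e0+d0 ≤ (s+2)/3 ∧ s/3 ≤ e1+d2 ∧ e1+d2 ≤ (s+2)/3 ∧ s/3 ≤ e2+d1 ∧ e2+d1 ≤ (s+2)/3) ∨
  (s/3 ≤ e0+d1 ∧ e0+d1 ≤ (s+2)/3 ∧ s/3 ≤ e1+d2 ∧ e1+d2 ≤ (s+2)/3 ∧ s/3 ≤ e2+d0 ∧ e2+d0 ≤ (s+2)/3) ∨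
  (s/3 ≤ e0+d2 ∧ e0+d2 ≤ (s+2)/3 ∧ s/3 ≤ e1+d0 ∧ e1+d0 ≤ (s+2)/3 ∧ s/3 ≤ e2+d1 ∧ e2+d1 ≤ (s+2)/3)

instance (e0 e1 e2 d0 d1 d2 : ℕ) : Decidable (P6 e0 e1 e2 d0 d1 d2) := by
  unfold P6; exact inferInstance

lemma keyfin : ∀ e0 < 2, ∀ e1 < 2, ∀ e2 < 2, ∀ d0 < 2, ∀ d1 < 2, ∀ d2 < 2,
    P6 e0 e1 e2 d0 d1 d2 := by decide

lemma keyfin' (e0 e1 e2 d0 d1 d2 : ℕ) (h0 : e0 ≤ 1) (h1 : e1 ≤ 1) (h2 : e2 ≤ 1)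
    (k0 : d0 ≤ 1) (k1 : d1 ≤ 1) (k2 : d2 ≤ 1) : P6 e0 e1 e2 d0 d1 d2 :=
  keyfin e0 (by omega) e1 (by omega) e2 (by omega) d0 (by omega) d1 (by omega) d2 (by omega)

lemma key6 (a0 a1 a2 b0 b1 b2 n : ℕ)
    (hn : n = a0+a1+a2+b0+b1+b2)
    (ha0 : (a0+a1+a2)/3 ≤ a0 ∧ a0 ≤ (a0+a1+a2+2)/3)
    (ha1 : (a0+a1+a2)/3 ≤ a1 ∧ a1 ≤ (a0+a1+a2+2)/3)
    (ha2 : (a0+a1+a2)/3 ≤ a2 ∧ a2 ≤ (a0+a1+a2+2)/3)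
    (hb0 : (b0+b1+b2)/3 ≤ b0 ∧ b0 ≤ (b0+b1+b2+2)/3)
    (hb1 : (b0+b1+b2)/3 ≤ b1 ∧ b1 ≤ (b0+b1+b2+2)/3)
    (hb2 : (b0+b1+b2)/3 ≤ b2 ∧ b2 ≤ (b0+b1+b2+2)/3) :
    (n/3 ≤ a0+b0 ∧ a0+b0 ≤ (n+2)/3 ∧ n/3 ≤ a1+b1 ∧ a1+b1 ≤ (n+2)/3 ∧ n/3 ≤ a2+b2 ∧ a2+b2 ≤ (n+2)/3) ∨
    (n/3 ≤ a0+b1 ∧ a0+b1 ≤ (n+2)/3 ∧ n/3 ≤ a1+b0 ∧ a1+b0 ≤ (n+2)/3 ∧ n/3 ≤ a2+b2 ∧ a2+b2 ≤ (n+2)/3) ∨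
    (n/3 ≤ a0+b2 ∧ a0+b2 ≤ (n+2)/3 ∧ n/3 ≤ a1+b1 ∧ a1+b1 ≤ (n+2)/3 ∧ n/3 ≤ a2+b0 ∧ a2+b0 ≤ (n+2)/3) ∨
    (n/3 ≤ a0+b0 ∧ a0+b0 ≤ (n+2)/3 ∧ n/3 ≤ a1+b2 ∧ a1+b2 ≤ (n+2)/3 ∧ n/3 ≤ a2+b1 ∧ a2+b1 ≤ (n+2)/3) ∨
    (n/3 ≤ a0+b1 ∧ a0+b1 ≤ (n+2)/3 ∧ n/3 ≤ a1+b2 ∧ a1+b2 ≤ (n+2)/3 ∧ n/3 ≤ a2+b0 ∧ a2+b0 ≤ (n+2)/3) ∨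
    (n/3 ≤ a0+b2 ∧ a0+b2 ≤ (n+2)/3 ∧ n/3 ≤ a1+b0 ∧ a1+b0 ≤ (n+2)/3 ∧ n/3 ≤ a2+b1 ∧ a2+b1 ≤ (n+2)/3) := by
  subst hn
  obtain ⟨q0, e0, e1, e2, h00, h01, h02, u0, u1, u2⟩ :
      ∃ q e0 e1 e2, a0 = q+e0 ∧ a1 = q+e1 ∧ a2 = q+e2 ∧ e0 ≤ 1 ∧ e1 ≤ 1 ∧ e2 ≤ 1 :=
    ⟨(a0+a1+a2)/3, a0-(a0+a1+a2)/3, a1-(a0+a1+a2)/3, a2-(a0+a1+a2)/3, by omega⟩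
  obtain ⟨q1, d0, d1, d2, h10, h11, h12, v0, v1, v2⟩ :
      ∃ q d0 d1 d2, b0 = q+d0 ∧ b1 = q+d1 ∧ b2 = q+d2 ∧ d0 ≤ 1 ∧ d1 ≤ 1 ∧ d2 ≤ 1 :=
    ⟨(b0+b1+b2)/3, b0-(b0+b1+b2)/3, b1-(b0+b1+b2)/3, b2-(b0+b1+b2)/3, by omega⟩
  clear ha0 ha1 ha2 hb0 hb1 hb2
  subst h00 h01 h02 h10 h11 h12
  have key := keyfin' e0 e1 e2 d0 d1 d2 u0 u1 u2 v0 v1 v2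
  unfold P6 at key
  rcases key with h | h | h | h | h | h
  · exact Or.inl (by omega)
  · exact Or.inr (Or.inl (by omega))
  · exact Or.inr (Or.inr (Or.inl (by omega)))
  · exact Or.inr (Or.inr (Or.inr (Or.inl (by omega))))
  · exact Or.inr (Or.inr (Or.inr (Or.inr (Or.inl (by omega)))))
  · exact Or.inr (Or.inr (Or.inr (Or.inr (Or.inr (by omega)))))

lemma exists_perm (a b : Fin 3 → ℕ)
    (ha : ∀ c, (a 0 + a 1 + a 2)/3 ≤ a c ∧ a c ≤ (a 0 + a 1 + a 2 + 2)/3)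
    (hb : ∀ c, (b 0 + b 1 + b 2)/3 ≤ b c ∧ b c ≤ (b 0 + b 1 + b 2 + 2)/3)
    (n : ℕ) (hn : n = a 0 + a 1 + a 2 + (b 0 + b 1 + b 2)) :
    ∃ σ : Equiv.Perm (Fin 3), ∀ c,
      n/3 ≤ a c + b (σ c) ∧ a c + b (σ c) ≤ (n+2)/3 := by
  have key := key6 (a 0) (a 1) (a 2) (b 0) (b 1) (b 2) n (by omega)
    (ha 0) (ha 1) (ha 2) (hb 0) (hb 1) (hb 2)
  rcases key with h | h | h | h | h | h
  · refine ⟨1, fun c => ?_⟩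
    fin_cases c
    · exact ⟨h.1, h.2.1⟩
    · exact ⟨h.2.2.1, h.2.2.2.1⟩
    · exact ⟨h.2.2.2.2.1, h.2.2.2.2.2⟩
  · refine ⟨Equiv.swap 0 1, fun c => ?_⟩
    fin_cases c
    · exact ⟨h.1, h.2.1⟩
    · exact ⟨h.2.2.1, h.2.2.2.1⟩
    · exact ⟨h.2.2.2.2.1, h.2.2.2.2.2⟩
  · refine ⟨Equiv.swap 0 2, fun c => ?_⟩
    fin_cases c
    · exact ⟨h.1, h.2.1⟩
    · exact ⟨h.2.2.1, h.2.2.2.1⟩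
    · exact ⟨h.2.2.2.2.1, h.2.2.2.2.2⟩
  · refine ⟨Equiv.swap 1 2, fun c => ?_⟩
    fin_cases c
    · exact ⟨h.1, h.2.1⟩
    · exact ⟨h.2.2.1, h.2.2.2.1⟩
    · exact ⟨h.2.2.2.2.1, h.2.2.2.2.2⟩
  · refine ⟨Equiv.swap 0 1 * Equiv.swap 1 2, fun c => ?_⟩
    fin_cases c
    · exact ⟨h.1, h.2.1⟩
    · exact ⟨h.2.2.1, h.2.2.2.1⟩
    · exact ⟨h.2.2.2.2.1, h.2.2.2.2.2⟩
  · refine ⟨Equiv.swap 1 2 * Equiv.swap 0 1, fun c => ?_⟩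
    fin_cases c
    · exact ⟨h.1, h.2.1⟩
    · exact ⟨h.2.2.1, h.2.2.2.1⟩
    · exact ⟨h.2.2.2.2.1, h.2.2.2.2.2⟩

lemma card_filter_sumType {V₀ V₁ : Type*} [Fintype V₀] [Fintype V₁]
    (p : V₀ ⊕ V₁ → Prop) [DecidablePred p] :
    (Finset.univ.filter p).card
      = (Finset.univ.filter fun a => p (Sum.inl a)).card
        + (Finset.univ.filter fun b => p (Sum.inr b)).card := by
  rw [← Finset.card_disjSum]
  congr 1
  rw [← Finset.univ_disjSum_univ]
  ext x
  cases x <;> simp [Finset.mem_disjSum]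

lemma card_eq_three_classes {V : Type*} [Fintype V] (χ : V → Fin 3) :
    Fintype.card V = (Finset.univ.filter fun x => χ x = 0).card
      + (Finset.univ.filter fun x => χ x = 1).card
      + (Finset.univ.filter fun x => χ x = 2).card := by
  have := Finset.card_eq_sum_card_fiberwise
    (f := χ) (s := Finset.univ) (t := Finset.univ) (fun x _ => Finset.mem_univ _)
  rw [Finset.card_univ] at this
  rw [this, Fin.sum_univ_three]

/-- The disjoint union of two simple graphs. -/
def sumGraph {V₀ V₁ : Type*} (G : SimpleGraph V₀) (H : SimpleGraph V₁) :
    SimpleGraph (V₀ ⊕ V₁) where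
  Adj x y :=
    (∃ a b, x = Sum.inl a ∧ y = Sum.inl b ∧ G.Adj a b) ∨
      (∃ a b, x = Sum.inr a ∧ y = Sum.inr b ∧ H.Adj a b)
  symm := by
    constructor
    rintro x y (⟨a, b, rfl, rfl, h⟩ | ⟨a, b, rfl, rfl, h⟩)
    · exact Or.inl ⟨b, a, rfl, rfl, h.symm⟩
    · exact Or.inr ⟨b, a, rfl, rfl, h.symm⟩
  loopless := by
    constructor
    rintro x (⟨a, b, rfl, h1, h2⟩ | ⟨a, b, rfl, h1, h2⟩) <;>
      (injection h1 with h; subst h; exact h2.ne rfl)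

/-- A 3-coloring is balanced if each color class has size between `⌊n/3⌋` and `⌈n/3⌉`. -/
def BalancedColoring {V : Type*} [Fintype V] (χ : V → Fin 3) : Prop :=
  ∀ c : Fin 3,
    Fintype.card V / 3 ≤ (Finset.univ.filter (fun x => χ x = c)).card ∧
      (Finset.univ.filter (fun x => χ x = c)).card ≤ (Fintype.card V + 2) / 3

theorem stmt14 {V₀ V₁ : Type*} [Fintype V₀] [Fintype V₁]
    (G₀ : SimpleGraph V₀) (G₁ : SimpleGraph V₁)
    (χ₀ : V₀ → Fin 3) (χ₁ : V₁ → Fin 3)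
    (h₀p : ∀ a b, G₀.Adj a b → χ₀ a ≠ χ₀ b) (h₀b : BalancedColoring χ₀)
    (h₁p : ∀ a b, G₁.Adj a b → χ₁ a ≠ χ₁ b) (h₁b : BalancedColoring χ₁) :
    ∃ χ : V₀ ⊕ V₁ → Fin 3,
      (∀ x y, (sumGraph G₀ G₁).Adj x y → χ x ≠ χ y) ∧ BalancedColoring χ := by
  classical
  set a : Fin 3 → ℕ := fun c => (Finset.univ.filter (fun x => χ₀ x = c)).card with ha
  set b : Fin 3 → ℕ := fun c => (Finset.univ.filter (fun x => χ₁ x = c)).card with hb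
  have hsa : Fintype.card V₀ = a 0 + a 1 + a 2 := card_eq_three_classes χ₀
  have hsb : Fintype.card V₁ = b 0 + b 1 + b 2 := card_eq_three_classes χ₁
  obtain ⟨σ, hσ⟩ := exists_perm a b
    (fun c => by rw [← hsa]; exact h₀b c)
    (fun c => by rw [← hsb]; exact h₁b c)
    (Fintype.card (V₀ ⊕ V₁))
    (by rw [Fintype.card_sum, hsa, hsb])
  refine ⟨Sum.elim χ₀ (fun v => σ.symm (χ₁ v)), ?_, ?_⟩
  · rintro x y (⟨p, q, rfl, rfl, hadj⟩ | ⟨p, q, rfl, rfl, hadj⟩)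
    · exact h₀p p q hadj
    · exact fun h => h₁p p q hadj (σ.symm.injective h)
  · intro c
    have hcard : (Finset.univ.filter
        (fun x => Sum.elim χ₀ (fun v => σ.symm (χ₁ v)) x = c)).card = a c + b (σ c) := by
      rw [card_filter_sumType]
      congr 1
      simp only [Sum.elim_inr, Equiv.symm_apply_eq]
      rfl
    rw [hcard]
    exact hσ c
end

section
/- Every permutation σ of a finite set with no fixed points (so its functional graph is a disjoint union of directed cycles of length ≥ 2 on n vertices) admits a 3-coloring χ : [n] → {0,1,2} such that χ(i) ≠ χ(σ(i)) for all i, and each color is used at least ⌊n/3⌋ and at most ⌈n/3⌉ times. -/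
/-- Coloring pattern for a cycle of length `L`, position `k`. -/
def patF (L k : ℕ) : Fin 3 :=
  if L % 3 = 1 ∧ 3 * (L / 3) ≤ k then 1 else ⟨k % 3, Nat.mod_lt _ (by norm_num)⟩

lemma patF_ne_succ (L k : ℕ) (h : k + 1 < L) : patF L k ≠ patF L (k + 1) := by
  unfold patF
  split_ifs with h1 h2 h2 <;> intro heq <;> have hv := congrArg Fin.val heq <;>
    simp [Fin.val_one] at hv <;> omega

lemma patF_wrap (L : ℕ) (h2 : 2 ≤ L) : patF L (L - 1) ≠ patF L 0 := by
  unfold patF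
  split_ifs with h1 h2' h2' <;> intro heq <;> have hv := congrArg Fin.val heq <;>
    simp [Fin.val_one] at hv <;> omega

lemma count_mod (a c : ℕ) : ((Finset.range (3 * a)).filter (fun k => k % 3 = c)).card = if c < 3 then a else 0 := by
  split_ifs with hc
  · have himg : (Finset.range (3 * a)).filter (fun k => k % 3 = c)
        = (Finset.range a).image (fun j => 3 * j + c) := by
      ext k
      simp only [Finset.mem_filter, Finset.mem_range, Finset.mem_image]
      constructor
      · rintro ⟨h1, h2⟩; exact ⟨k / 3, by omega, by omega⟩
      · rintro ⟨j, hj, rfl⟩; omega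
    rw [himg, Finset.card_image_of_injective _ (fun x y h => by omega), Finset.card_range]
  · rw [Finset.filter_false_of_mem, Finset.card_empty]
    intro k _ hk
    omega

lemma patcount (L : ℕ) (c : Fin 3) :
    ((Finset.range L).filter (fun k => patF L k = c)).card
      = L / 3 + (if (L % 3 = 1 ∧ c = 1) ∨ (L % 3 = 2 ∧ c ≠ 2) then 1 else 0) := by
  have hL : L = 3 * (L / 3) + L % 3 := (Nat.div_add_mod L 3).symm
  set a := L / 3 with ha
  have hsplit : Finset.range L = Finset.range (3 * a) ∪ Finset.Ico (3 * a) L := by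
    rw [Finset.range_eq_Ico, Finset.range_eq_Ico]
    exact (Finset.Ico_union_Ico_eq_Ico (Nat.zero_le (3 * a)) (show 3 * a ≤ L by omega)).symm
  have hdisj : Disjoint ((Finset.range (3 * a)).filter (fun k => patF L k = c))
      ((Finset.Ico (3 * a) L).filter (fun k => patF L k = c)) := by
    apply Finset.disjoint_filter_filter
    simp only [Finset.disjoint_left, Finset.mem_range, Finset.mem_Ico]
    omega
  rw [hsplit, Finset.filter_union, Finset.card_union_of_disjoint hdisj]
  have hhead : ((Finset.range (3 * a)).filter (fun k => patF L k = c)).card = a := by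
    have : ∀ k ∈ Finset.range (3 * a), (patF L k = c) = (k % 3 = c.val) := by
      intro k hk
      simp only [Finset.mem_range] at hk
      unfold patF
      rw [if_neg (by omega)]
      simp [Fin.ext_iff]
    rw [Finset.filter_congr (fun k hk => by rw [this k hk]), count_mod, if_pos c.isLt]
  rw [hhead]
  congr 1
  have hr : L % 3 = 0 ∨ L % 3 = 1 ∨ L % 3 = 2 := by omega
  rcases hr with hr | hr | hr
  · have : Finset.Ico (3 * a) L = ∅ := by rw [Finset.Ico_eq_empty]; omega
    simp [this, hr]
  · have : Finset.Ico (3 * a) L = {3 * a} := by ext k; simp [Finset.mem_Ico]; omega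
    rw [this]
    have hp : patF L (3 * a) = 1 := by unfold patF; rw [if_pos ⟨hr, le_refl _⟩]
    simp only [Finset.filter_singleton, hp, hr]
    by_cases hc : c = 1 <;> simp [hc, Fin.ext_iff] <;> omega
  · have : Finset.Ico (3 * a) L = {3 * a, 3 * a + 1} := by
      ext k; simp [Finset.mem_Ico]; omega
    rw [this]
    have hp0 : patF L (3 * a) = 0 := by
      unfold patF; rw [if_neg (by omega)]; simp [Fin.ext_iff]
    have hp1 : patF L (3 * a + 1) = 1 := by
      unfold patF; rw [if_neg (by omega)]; simp [Fin.ext_iff]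
    rw [Finset.filter_insert, Finset.filter_singleton, hp0, hp1]
    fin_cases c <;> simp [hr, Fin.ext_iff] <;> decide

open Equiv Equiv.Perm Finset in
lemma key_s15 {α : Type*} [Fintype α] [DecidableEq α] (σ : Equiv.Perm α) (hσ : ∀ i, σ i ≠ i) :
    ∀ (m : ℕ) (s : Finset α), s.card ≤ m → (∀ x ∈ s, σ x ∈ s) →
    ∀ f : Fin 3 → ℕ, (∑ c, f c) = s.card → (∀ c d, f c ≤ f d + 1) →
    ∃ χ : α → Fin 3, (∀ i ∈ s, χ i ≠ χ (σ i)) ∧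
      ∀ c, (s.filter (fun i => χ i = c)).card = f c := by
  intro m
  induction m with
  | zero =>
    intro s hcard _ f hsum _
    have hs : s = ∅ := Finset.card_eq_zero.mp (Nat.le_zero.mp hcard)
    subst hs
    refine ⟨fun _ => 0, by simp, fun c => ?_⟩
    simp only [Finset.card_empty] at hsum
    rw [Finset.filter_empty, Finset.card_empty]
    exact (Finset.sum_eq_zero_iff.mp hsum c (Finset.mem_univ c)).symm
  | succ m ih =>
    intro s hcard hclosed f hsum hbal
    rcases s.eq_empty_or_nonempty with rfl | ⟨i₀, hi₀⟩
    · refine ⟨fun _ => 0, by simp, fun c => ?_⟩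
      simp only [Finset.card_empty] at hsum
      rw [Finset.filter_empty, Finset.card_empty]
      exact (Finset.sum_eq_zero_iff.mp hsum c (Finset.mem_univ c)).symm
    -- the cycle of i₀
    set C : Finset α := (σ.cycleOf i₀).support with hCdef
    have hC_mem : ∀ x, x ∈ C ↔ σ.SameCycle i₀ x := fun x =>
      Equiv.Perm.mem_support_cycleOf_iff' (hσ i₀)
    have hcyc : σ.IsCycleOn C := Equiv.Perm.isCycleOn_support_cycleOf σ i₀
    have hi₀C : i₀ ∈ C := (hC_mem i₀).mpr (Equiv.Perm.SameCycle.refl σ i₀)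
    obtain ⟨L, hLC⟩ : ∃ l : ℕ, C.card = l := ⟨C.card, rfl⟩
    have hσC : ∀ x, x ∈ C ↔ σ x ∈ C := by
      intro x
      rw [hC_mem, hC_mem, Equiv.Perm.sameCycle_apply_right]
    have hL2 : 2 ≤ L := by
      have hσi₀ : σ i₀ ∈ C := (hσC i₀).mp hi₀C
      exact hLC ▸ Finset.one_lt_card.mpr ⟨i₀, hi₀C, σ i₀, hσi₀, (hσ i₀).symm⟩
    have hpow_mem : ∀ k : ℕ, (σ ^ k) i₀ ∈ C := by
      intro k
      rw [hC_mem]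
      exact ⟨(k : ℤ), by rw [zpow_natCast]⟩
    have tri : ∀ d : Fin 3, d = 0 ∨ d = 1 ∨ d = 2 := by decide
    have hpow_s : ∀ k : ℕ, (σ ^ k) i₀ ∈ s := by
      intro k
      induction k with
      | zero => simpa using hi₀
      | succ k ihk =>
        rw [pow_succ']
        exact hclosed _ ihk
    have hCs : C ⊆ s := by
      intro x hx
      obtain ⟨k, hkL, hk⟩ := hcyc.exists_pow_eq hi₀C hx
      rw [← hk]
      exact hpow_s k
    -- index within the cycle
    have hex : ∀ x ∈ C, ∃ k, (σ ^ k) i₀ = x := by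
      intro x hx
      obtain ⟨k, _, hk⟩ := hcyc.exists_pow_eq hi₀C hx
      exact ⟨k, hk⟩
    set idx : α → ℕ := fun x => if hx : x ∈ C then Nat.find (hex x hx) else 0 with hidxdef
    have hidx_spec : ∀ x ∈ C, (σ ^ idx x) i₀ = x := by
      intro x hx
      simp only [hidxdef, dif_pos hx]
      exact Nat.find_spec (hex x hx)
    have hidx_lt : ∀ x ∈ C, idx x < L := by
      intro x hx
      obtain ⟨k, hkL, hk⟩ := hcyc.exists_pow_eq hi₀C hx
      simp only [hidxdef, dif_pos hx]
      exact lt_of_le_of_lt (Nat.find_min' (hex x hx) hk) (hLC ▸ hkL)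
    have hidx_unique : ∀ x ∈ C, ∀ k < L, (σ ^ k) i₀ = x → idx x = k := by
      intro x hx k hkL hk
      have h1 : idx x ≤ k := by
        simp only [hidxdef, dif_pos hx]
        exact Nat.find_min' (hex x hx) hk
      have h2 : (σ ^ idx x) i₀ = (σ ^ k) i₀ := by rw [hidx_spec x hx, hk]
      have h3 := (hcyc.pow_apply_eq_pow_apply hi₀C).mp h2
      rw [hLC] at h3
      have := hidx_lt x hx
      unfold Nat.ModEq at h3
      rw [Nat.mod_eq_of_lt (hidx_lt x hx), Nat.mod_eq_of_lt hkL] at h3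
      exact h3
    have hidx_pow : ∀ k < L, idx ((σ ^ k) i₀) = k := fun k hk =>
      hidx_unique _ (hpow_mem k) k hk rfl
    have hidx_succ : ∀ x ∈ C, idx (σ x) = if idx x + 1 = L then 0 else idx x + 1 := by
      intro x hx
      have hσx : σ x ∈ C := (hσC x).mp hx
      have hs1 : (σ ^ (idx x + 1)) i₀ = σ x := by
        rw [pow_succ', Equiv.Perm.mul_apply, hidx_spec x hx]
      split_ifs with hL
      · have : σ x = i₀ := by
          rw [← hs1, hL]
          exact hLC ▸ hcyc.pow_card_apply hi₀C
        rw [this]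
        exact hidx_unique i₀ hi₀C 0 (by omega) (by simp)
      · exact hidx_unique (σ x) hσx (idx x + 1) (lt_of_le_of_ne (hidx_lt x hx) hL) hs1
    -- choose a color permutation π based on L % 3 and f
    obtain ⟨cmax, hcmax⟩ : ∃ c : Fin 3, ∀ d, f d ≤ f c := by
      obtain ⟨c, _, hc⟩ := Finset.exists_max_image Finset.univ f ⟨0, Finset.mem_univ 0⟩
      exact ⟨c, fun d => hc d (Finset.mem_univ d)⟩
    obtain ⟨cmin, hcmin⟩ : ∃ c : Fin 3, ∀ d, f c ≤ f d := by
      obtain ⟨c, _, hc⟩ := Finset.exists_min_image Finset.univ f ⟨0, Finset.mem_univ 0⟩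
      exact ⟨c, fun d => hc d (Finset.mem_univ d)⟩
    set π : Equiv.Perm (Fin 3) :=
      if L % 3 = 1 then Equiv.swap 1 cmax else if L % 3 = 2 then Equiv.swap 2 cmin
        else Equiv.refl _ with hπdef
    set g : Fin 3 → ℕ := fun c =>
      L / 3 + (if (L % 3 = 1 ∧ π.symm c = 1) ∨ (L % 3 = 2 ∧ π.symm c ≠ 2) then 1 else 0)
      with hgdef
    -- closed form of g
    have hg_closed : (L % 3 = 0 ∧ ∀ c, g c = L / 3)
        ∨ (L % 3 = 1 ∧ ∀ c, g c = L / 3 + if c = cmax then 1 else 0)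
        ∨ (L % 3 = 2 ∧ ∀ c, g c = L / 3 + if c = cmin then 0 else 1) := by
      have hr : L % 3 = 0 ∨ L % 3 = 1 ∨ L % 3 = 2 := by omega
      rcases hr with hr | hr | hr
      · exact Or.inl ⟨hr, fun c => by simp [hgdef, hr]⟩
      · refine Or.inr (Or.inl ⟨hr, fun c => ?_⟩)
        have hπ : π = Equiv.swap 1 cmax := by rw [hπdef, if_pos hr]
        have : π.symm c = 1 ↔ c = cmax := by
          rw [hπ, Equiv.symm_swap]
          constructor
          · intro h
            have h2 := congrArg (Equiv.swap 1 cmax) h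
            rwa [Equiv.swap_apply_self, Equiv.swap_apply_left] at h2
          · intro h; rw [h, Equiv.swap_apply_right]
        have hcond : ((L % 3 = 1 ∧ π.symm c = 1) ∨ (L % 3 = 2 ∧ π.symm c ≠ 2)) ↔ c = cmax := by
          constructor
          · rintro (⟨-, h⟩ | ⟨h, -⟩)
            · exact this.mp h
            · omega
          · intro h
            exact Or.inl ⟨hr, this.mpr h⟩
        simp only [hgdef, hcond]
      · refine Or.inr (Or.inr ⟨hr, fun c => ?_⟩)
        have hπ : π = Equiv.swap 2 cmin := by rw [hπdef, if_neg (by omega), if_pos hr]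
        have : π.symm c = 2 ↔ c = cmin := by
          rw [hπ, Equiv.symm_swap]
          constructor
          · intro h
            have h2 := congrArg (Equiv.swap 2 cmin) h
            rwa [Equiv.swap_apply_self, Equiv.swap_apply_left] at h2
          · intro h; rw [h, Equiv.swap_apply_right]
        have hcond : ((L % 3 = 1 ∧ π.symm c = 1) ∨ (L % 3 = 2 ∧ π.symm c ≠ 2)) ↔ ¬ (c = cmin) := by
          constructor
          · rintro (⟨h, -⟩ | ⟨-, h⟩)
            · omega
            · exact fun hc => h (this.mpr hc)
          · intro h
            exact Or.inr ⟨hr, fun h2 => h (this.mp h2)⟩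
        simp only [hgdef, hcond]
        by_cases hc : c = cmin <;> simp [hc]
    have hLN : L ≤ s.card := hLC ▸ Finset.card_le_card hCs
    have hsum3 : f 0 + f 1 + f 2 = s.card := by rw [← hsum, Fin.sum_univ_three]
    have hb01 := hbal 0 1; have hb10 := hbal 1 0; have hb02 := hbal 0 2
    have hb20 := hbal 2 0; have hb12 := hbal 1 2; have hb21 := hbal 2 1
    have hflow : ∀ c, L / 3 ≤ f c := by
      intro c
      rcases tri c with rfl | rfl | rfl <;> omega
    have hfmax : L % 3 = 1 → L / 3 + 1 ≤ f cmax := by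
      intro hr
      have := hcmax 0; have := hcmax 1; have := hcmax 2
      omega
    have hstrong : L % 3 = 2 → ∀ e, e ≠ cmin → L / 3 + 1 ≤ f e := by
      intro hr e he
      have hm0 := hcmin 0; have hm1 := hcmin 1; have hm2 := hcmin 2
      rcases tri e with rfl | rfl | rfl <;> rcases tri cmin with rfl | rfl | rfl <;>
        first
          | exact absurd rfl he
          | omega
    -- pointwise g ≤ f and balance of f - g
    have hgf : ∀ c, g c ≤ f c := by
      intro c
      rcases hg_closed with ⟨hr, hg⟩ | ⟨hr, hg⟩ | ⟨hr, hg⟩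
      · rw [hg]; exact hflow c
      · rw [hg]
        by_cases hc : c = cmax
        · rw [if_pos hc, hc]; exact hfmax hr
        · rw [if_neg hc]; simpa using hflow c
      · rw [hg]
        by_cases hc : c = cmin
        · rw [if_pos hc]; simpa using hflow c
        · rw [if_neg hc]; exact hstrong hr c hc
    have hgsum : (∑ c, g c) = L := by
      rcases hg_closed with ⟨hr, hg⟩ | ⟨hr, hg⟩ | ⟨hr, hg⟩ <;>
        rw [Fin.sum_univ_three, hg 0, hg 1, hg 2]
      · omega
      · rcases tri cmax with rfl | rfl | rfl <;> (try simp) <;> omega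
      · rcases tri cmin with rfl | rfl | rfl <;> (try simp) <;> omega
    have hbal' : ∀ c d, f c - g c ≤ (f d - g d) + 1 := by
      intro c d
      have hb := hbal c d
      have hbd := hbal d c
      have h1 := hgf c; have h2 := hgf d
      have hfc := hflow c
      have hfd := hflow d
      rcases hg_closed with ⟨hr, hg⟩ | ⟨hr, hg⟩ | ⟨hr, hg⟩
      · rw [hg c, hg d]; omega
      · rw [hg c, hg d]
        by_cases hc : c = cmax <;> by_cases hd : d = cmax
        · rw [if_pos hc, if_pos hd]; omega
        · rw [if_pos hc, if_neg hd]; omega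
        · rw [if_neg hc, if_pos hd]
          have h1 : f c ≤ f d := by rw [hd]; exact hcmax c
          have h2 : L / 3 + 1 ≤ f d := by rw [hd]; exact hfmax hr
          omega
        · rw [if_neg hc, if_neg hd]; omega
      · rw [hg c, hg d]
        by_cases hc : c = cmin <;> by_cases hd : d = cmin
        · rw [if_pos hc, if_pos hd]; omega
        · rw [if_pos hc, if_neg hd]
          have h1 : f c ≤ f d := hc ▸ hcmin d
          have h2 := hstrong hr d hd
          omega
        · rw [if_neg hc, if_pos hd]; omega
        · rw [if_neg hc, if_neg hd]; omega
    -- recursive call on s \ C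
    set s' : Finset α := s \ C with hs'def
    have hs'card : s'.card = s.card - L := by
      rw [hs'def, Finset.card_sdiff_of_subset hCs, hLC]
    have hclosed' : ∀ x ∈ s', σ x ∈ s' := by
      intro x hx
      rw [hs'def, Finset.mem_sdiff] at hx ⊢
      exact ⟨hclosed x hx.1, fun h => hx.2 ((hσC x).mpr h)⟩
    have hsum' : (∑ c, (f c - g c)) = s'.card := by
      rw [hs'card]
      have h3f := Fin.sum_univ_three f
      have h3g := Fin.sum_univ_three g
      rw [Fin.sum_univ_three]
      have := hgf 0; have := hgf 1; have := hgf 2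
      omega
    obtain ⟨χ', hχ'prop, hχ'count⟩ := ih s' (by omega) hclosed' (fun c => f c - g c) hsum' hbal'
    -- define the coloring
    set χ : α → Fin 3 := fun x => if x ∈ C then π (patF L (idx x)) else χ' x with hχdef
    have hχC : ∀ x ∈ C, χ x = π (patF L (idx x)) := fun x hx => by
      simp only [hχdef, if_pos hx]
    have hχnC : ∀ x ∉ C, χ x = χ' x := fun x hx => by
      simp only [hχdef, if_neg hx]
    refine ⟨χ, ?_, ?_⟩
    · -- properness
      intro i hi
      by_cases hiC : i ∈ C
      · have hσiC : σ i ∈ C := (hσC i).mp hiC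
        rw [hχC i hiC, hχC (σ i) hσiC]
        intro heq
        have heq' : patF L (idx i) = patF L (idx (σ i)) := π.injective heq
        rw [hidx_succ i hiC] at heq'
        split_ifs at heq' with hL
        · have hidxi : idx i = L - 1 := by omega
          rw [hidxi] at heq'
          exact patF_wrap L hL2 heq'
        · exact patF_ne_succ L (idx i) (lt_of_le_of_ne (hidx_lt i hiC) hL) heq'
      · have hσiC : σ i ∉ C := fun h => hiC ((hσC i).mpr h)
        rw [hχnC i hiC, hχnC (σ i) hσiC]
        exact hχ'prop i (Finset.mem_sdiff.mpr ⟨hi, hiC⟩)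
    · -- counting
      intro c
      have hsplitS : s.filter (fun i => χ i = c)
          = C.filter (fun i => χ i = c) ∪ s'.filter (fun i => χ i = c) := by
        rw [← Finset.filter_union, Finset.union_sdiff_of_subset hCs]
      have hdisj : Disjoint (C.filter (fun i => χ i = c)) (s'.filter (fun i => χ i = c)) := by
        apply Finset.disjoint_filter_filter
        rw [hs'def]
        exact Finset.disjoint_sdiff
      rw [hsplitS, Finset.card_union_of_disjoint hdisj]
      have hCcount : (C.filter (fun i => χ i = c)).card = g c := by
        have himg : C.filter (fun i => χ i = c)
            = ((Finset.range L).filter (fun k => patF L k = π.symm c)).image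
                (fun k => (σ ^ k) i₀) := by
          ext x
          simp only [Finset.mem_filter, Finset.mem_image, Finset.mem_range]
          constructor
          · rintro ⟨hxC, hxc⟩
            refine ⟨idx x, ⟨hidx_lt x hxC, ?_⟩, hidx_spec x hxC⟩
            rw [hχC x hxC] at hxc
            rw [Equiv.eq_symm_apply]
            exact hxc
          · rintro ⟨k, ⟨hkL, hkp⟩, rfl⟩
            refine ⟨hpow_mem k, ?_⟩
            rw [hχC _ (hpow_mem k), hidx_pow k hkL, hkp, Equiv.apply_symm_apply]
        have hinj : Set.InjOn (fun k => (σ ^ k) i₀)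
            ((Finset.range L).filter (fun k => patF L k = π.symm c)) := by
          intro a ha b hb hab
          simp only [Finset.coe_filter, Set.mem_setOf_eq, Finset.mem_range] at ha hb
          have hmod := (hcyc.pow_apply_eq_pow_apply hi₀C).mp hab
          rw [hLC] at hmod
          unfold Nat.ModEq at hmod
          rw [Nat.mod_eq_of_lt ha.1, Nat.mod_eq_of_lt hb.1] at hmod
          exact hmod
        rw [himg, Finset.card_image_of_injOn hinj, patcount]
      have hs'count : (s'.filter (fun i => χ i = c)).card = f c - g c := by
        have heq : s'.filter (fun i => χ i = c) = s'.filter (fun i => χ' i = c) := by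
          apply Finset.filter_congr
          intro x hx
          rw [hs'def, Finset.mem_sdiff] at hx
          rw [hχnC x hx.2]
        rw [heq, hχ'count c]
      rw [hCcount, hs'count]
      have := hgf c
      omega


theorem stmt15 (n : ℕ) (σ : Equiv.Perm (Fin n)) (hσ : ∀ i, σ i ≠ i) :
    ∃ χ : Fin n → Fin 3,
      (∀ i, χ i ≠ χ (σ i)) ∧
      ∀ c : Fin 3,
        n / 3 ≤ (Finset.univ.filter (fun i => χ i = c)).card ∧
          (Finset.univ.filter (fun i => χ i = c)).card ≤ (n + 2) / 3 := by
  have h0 : ((0 : Fin 3) : ℕ) = 0 := rfl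
  have h1 : ((1 : Fin 3) : ℕ) = 1 := rfl
  have h2 : ((2 : Fin 3) : ℕ) = 2 := rfl
  have hcardu : (Finset.univ : Finset (Fin n)).card = n := by
    rw [Finset.card_univ, Fintype.card_fin]
  have hsum : (∑ c : Fin 3, (n / 3 + if (c : ℕ) < n % 3 then 1 else 0))
      = (Finset.univ : Finset (Fin n)).card := by
    rw [Fin.sum_univ_three, hcardu, h0, h1, h2]
    split_ifs <;> omega
  have hbal : ∀ c d : Fin 3, (n / 3 + if (c : ℕ) < n % 3 then 1 else 0)
      ≤ (n / 3 + if (d : ℕ) < n % 3 then 1 else 0) + 1 := by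
    intro c d
    split_ifs <;> omega
  obtain ⟨χ, hprop, hcount⟩ := key_s15 σ hσ n Finset.univ (by omega)
    (fun x _ => Finset.mem_univ _) (fun c => n / 3 + if (c : ℕ) < n % 3 then 1 else 0) hsum hbal
  refine ⟨χ, fun i => hprop i (Finset.mem_univ i), fun c => ?_⟩
  rw [hcount c]
  constructor
  · omega
  · split_ifs with h
    · have : 1 ≤ n % 3 := by omega
      omega
    · omega
end

section
/- (Counting Lemma) Suppose in an oblivious reconfigurable network topology with connection schedule π, a node a can reach k other nodes within L timesteps using at most h physical hops per path, where h ≤ L/3. Then k ≤ 2·C(L, h), where C(L,h) is the binomial coefficient. -/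
open scoped Classical

/-- The position of a message that starts at node `a` at time `0` and, at each timestep `t`,
traverses the physical edge of the connection schedule `π` if `b t = true` and waits
otherwise. -/
def pos {N : ℕ} (π : ℕ → Equiv.Perm (Fin N)) (b : ℕ → Bool) (a : Fin N) : ℕ → Fin N
  | 0 => a
  | t + 1 => if b t then (π t) (pos π b a t) else pos π b a t

lemma pos_congr {N : ℕ} (π : ℕ → Equiv.Perm (Fin N)) (b b' : ℕ → Bool) (a : Fin N)
    (n : ℕ) (hb : ∀ t < n, b t = b' t) : pos π b a n = pos π b' a n := by
  induction n with
  | zero => rfl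
  | succ n ih =>
    have h1 : pos π b a n = pos π b' a n := ih (fun t ht => hb t (ht.trans (Nat.lt_succ_self n)))
    simp only [pos, h1, hb n (Nat.lt_succ_self n)]

lemma sum_choose_le (L h : ℕ) (hL : 3 * h ≤ L) :
    ∑ i ∈ Finset.range (h + 1), Nat.choose L i ≤ 2 * Nat.choose L h := by
  induction h with
  | zero => simp
  | succ h ih =>
    have h3 : 3 * h ≤ L := by omega
    have key : 2 * Nat.choose L h ≤ Nat.choose L (h + 1) := by
      have hid := Nat.choose_succ_right_eq L h
      have hc : Nat.choose L h * (2 * (h + 1)) ≤ Nat.choose L h * (L - h) :=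
        Nat.mul_le_mul_left _ (by omega)
      have : 2 * Nat.choose L h * (h + 1) ≤ Nat.choose L (h + 1) * (h + 1) := by
        rw [hid]; linarith [hc]
      exact Nat.le_of_mul_le_mul_right this (Nat.succ_pos h)
    calc ∑ i ∈ Finset.range (h + 2), Nat.choose L i
        = (∑ i ∈ Finset.range (h + 1), Nat.choose L i) + Nat.choose L (h + 1) := by
          rw [Finset.sum_range_succ]
      _ ≤ 2 * Nat.choose L h + Nat.choose L (h + 1) := by
          exact Nat.add_le_add_right (ih h3) _
      _ ≤ 2 * Nat.choose L (h + 1) := by omega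

theorem stmt18 (N L h : ℕ) (π : ℕ → Equiv.Perm (Fin N)) (a : Fin N)
    (hh : h ≤ L / 3) (k : ℕ)
    (hk : k = (Finset.univ.filter (fun c : Fin N => c ≠ a ∧
        ∃ b : ℕ → Bool, ((Finset.range L).filter (fun t => b t = true)).card ≤ h ∧
          pos π b a L = c)).card) :
    k ≤ 2 * Nat.choose L h := by
  subst hk
  set A := Finset.univ.filter (fun c : Fin N => c ≠ a ∧
        ∃ b : ℕ → Bool, ((Finset.range L).filter (fun t => b t = true)).card ≤ h ∧
          pos π b a L = c) with hA
  set T : Finset (Finset ℕ) :=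
    (Finset.range (h + 1)).biUnion (fun i => (Finset.range L).powersetCard i) with hT
  -- the map sending each reachable node to a witness set of hop timesteps
  set P := fun (c : Fin N) => ∃ b : ℕ → Bool,
      ((Finset.range L).filter (fun t => b t = true)).card ≤ h ∧ pos π b a L = c with hP
  set f : Fin N → Finset ℕ := fun c =>
    if hc : P c then (Finset.range L).filter (fun t => hc.choose t = true) else ∅ with hf
  -- key: from the witness set we can recover c
  have hrec : ∀ c, (hc : P c) → pos π (fun t => decide (t ∈ f c)) a L = c := by
    intro c hc
    have hspec := hc.choose_spec
    have : pos π (fun t => decide (t ∈ f c)) a L = pos π hc.choose a L := by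
      apply pos_congr
      intro t ht
      simp [hf, hc, Finset.mem_filter, Finset.mem_range, ht]
    rw [this, hspec.2]
  have hmaps : ∀ c ∈ A, f c ∈ T := by
    intro c hcA
    have hc : P c := (Finset.mem_filter.mp hcA).2.2
    simp only [hT, Finset.mem_biUnion, Finset.mem_range, Finset.mem_powersetCard]
    refine ⟨(f c).card, ?_, ?_, rfl⟩
    · have : (f c).card ≤ h := by
        simp only [hf, dif_pos hc]
        exact hc.choose_spec.1
      omega
    · simp only [hf, dif_pos hc]
      exact Finset.filter_subset _ _
  have hinj : Set.InjOn f A := by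
    intro c hcA c' hc'A hfe
    have hc : P c := (Finset.mem_filter.mp hcA).2.2
    have hc' : P c' := (Finset.mem_filter.mp hc'A).2.2
    have h1 := hrec c hc
    have h2 := hrec c' hc'
    rw [← h1, ← h2, hfe]
  have hcard : A.card ≤ T.card := Finset.card_le_card_of_injOn f hmaps hinj
  have hTcard : T.card ≤ ∑ i ∈ Finset.range (h + 1), Nat.choose L i := by
    calc T.card ≤ ∑ i ∈ Finset.range (h + 1), ((Finset.range L).powersetCard i).card :=
          Finset.card_biUnion_le
      _ = ∑ i ∈ Finset.range (h + 1), Nat.choose L i := by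
          apply Finset.sum_congr rfl
          intro i _
          rw [Finset.card_powersetCard, Finset.card_range]
  have hL : 3 * h ≤ L := by omega
  exact hcard.trans (hTcard.trans (sum_choose_le L h hL))
end
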